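/- arXiv:2204.06405 — 5 statements merged into one kernel-verified Lean document; each statement's English description precedes it below -/
import Mathlib

section
/- For m-almost every x in (0,1) with binary expansion 0.x₁x₂x₃…, the asymptotic density of the set of n ∈ ℕ such that ∑_{l=0}^{n} C(n,l)·x_{l+1} ≡ 0 (mod 2) equals 1/2, where C(n,l) denotes the binomial coefficient and m is Lebesgue measure on [0,1]. -/
open Filter MeasureTheory

/-- The `i`-th binary digit of `x ∈ (0,1)`, i.e. `x_i` in `x = 0.x₁x₂x₃…`. -/
noncomputable def binDigit (x : ℝ) (i : ℕ) : ℕ := ⌊x * 2 ^ i⌋₊ % 2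

noncomputable def myZ (n : ℕ) (x : ℝ) : ℝ :=
  (-1 : ℝ) ^ (∑ l ∈ Finset.range (n + 1), Nat.choose n l * binDigit x (l + 1))

lemma myZ_eq (n : ℕ) (x : ℝ) :
    myZ n x = 1 - 2 * (((∑ l ∈ Finset.range (n + 1), Nat.choose n l * binDigit x (l + 1)) % 2 : ℕ) : ℝ) := by
  unfold myZ
  rcases Nat.even_or_odd (∑ l ∈ Finset.range (n + 1), Nat.choose n l * binDigit x (l + 1)) with h | h
  · rw [h.neg_one_pow, Nat.even_iff.mp h]; norm_num
  · rw [h.neg_one_pow, Nat.odd_iff.mp h]; norm_num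

lemma myZ_sq (n : ℕ) (x : ℝ) : myZ n x * myZ n x = 1 := by
  unfold myZ; rw [← pow_add, Even.neg_one_pow ⟨_, rfl⟩]

lemma abs_myZ (n : ℕ) (x : ℝ) : |myZ n x| = 1 := by
  unfold myZ; rw [abs_pow, abs_neg, abs_one, one_pow]

lemma measurable_binDigit (i : ℕ) : Measurable (fun x : ℝ => binDigit x i) := by
  have h : Measurable (fun x : ℝ => ⌊x * 2 ^ i⌋₊) := (measurable_id.mul_const ((2:ℝ)^i)).nat_floor
  exact (measurable_from_top (f := fun n : ℕ => n % 2)).comp h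

lemma measurable_myZ (n : ℕ) : Measurable (myZ n) := by
  unfold myZ
  apply Measurable.pow measurable_const
  exact Finset.measurable_sum _ (fun l _ => (measurable_binDigit (l+1)).const_mul _)

lemma digit_on_Ico {N k i : ℕ} (hk : k < 2 ^ N) (hi1 : 1 ≤ i) (hiN : i ≤ N) {x : ℝ}
    (hx : x ∈ Set.Ico ((k : ℝ) / 2 ^ N) (((k : ℕ) + 1 : ℝ) / 2 ^ N)) :
    binDigit x i = k / 2 ^ (N - i) % 2 := by
  obtain ⟨hx1, hx2⟩ := hx
  have h2 : (0:ℝ) < 2 ^ N := by positivity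
  unfold binDigit
  congr 1
  set q := k / 2 ^ (N - i) with hq
  have hNi : 2 ^ (N - i) * 2 ^ i = 2 ^ N := by
    rw [← pow_add]; congr 1; omega
  have hql : q * 2 ^ (N - i) ≤ k := Nat.div_mul_le_self k _ |>.trans_eq (by ring_nf)
  have hqu : k < (q + 1) * 2 ^ (N - i) := by
    have h0 := Nat.div_add_mod k (2 ^ (N - i))
    have h3 : k % 2 ^ (N - i) < 2 ^ (N - i) := Nat.mod_lt _ (Nat.two_pow_pos _)
    calc k = 2 ^ (N-i) * q + k % 2 ^ (N-i) := h0.symm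
      _ < 2 ^ (N-i) * q + 2 ^ (N-i) := by omega
      _ = (q+1) * 2 ^ (N-i) := by ring
  have hx0 : (0:ℝ) ≤ x := le_trans (by positivity) hx1
  rw [Nat.floor_eq_iff (by positivity)]
  constructor
  · calc (q : ℝ) ≤ (k : ℝ) / 2 ^ (N - i) := by
          rw [le_div_iff₀ (by positivity)]
          exact_mod_cast Nat.div_mul_le_self k _
        _ ≤ x * 2 ^ i := by
          rw [div_le_iff₀ (by positivity)]
          calc (k:ℝ) = (k:ℝ)/2^N * 2^N := by field_simp
            _ ≤ x * 2^N := by gcongr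
            _ = x * 2^i * 2^(N-i) := by rw [mul_assoc, mul_comm ((2:ℝ)^i)]; norm_cast; rw [hNi]
  · calc x * 2 ^ i < ((k:ℝ)+1)/2^N * 2^i := by gcongr
      _ ≤ (q:ℝ) + 1 := by
          rw [div_mul_eq_mul_div, div_le_iff₀ h2]
          calc ((k:ℝ)+1) * 2^i ≤ ((q:ℝ)+1) * 2^(N-i) * 2^i := by
                have : (k:ℝ) + 1 ≤ ((q:ℝ)+1) * 2^(N-i) := by exact_mod_cast hqu
                nlinarith [pow_pos (zero_lt_two (α := ℝ)) i, this]
            _ = ((q:ℝ)+1) * 2^N := by rw [mul_assoc]; norm_cast; rw [hNi]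

lemma sum_range_add' {M : Type*} [AddCommMonoid M] (f : ℕ → M) (m n : ℕ) :
    ∑ k ∈ Finset.range (m + n), f k = (∑ k ∈ Finset.range m, f k) + ∑ k ∈ Finset.range n, f (m + k) := by
  induction n with
  | zero => simp
  | succ n ih => rw [← Nat.add_assoc, Finset.sum_range_succ, ih, Finset.sum_range_succ, add_assoc]

lemma char_sum : ∀ (N : ℕ) (c : ℕ → ℕ), (∃ l, l < N ∧ c l % 2 = 1) →
    ∑ k ∈ Finset.range (2 ^ N), ((-1 : ℝ)) ^ (∑ l ∈ Finset.range N, c l * (k / 2 ^ (N - 1 - l) % 2)) = 0 := by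
  intro N
  induction N with
  | zero => rintro c ⟨l, hl, -⟩; omega
  | succ N ih =>
    intro c ⟨l0, hl0, hodd⟩
    have e2 : 2 ^ (N + 1) = 2 ^ N + 2 ^ N := by ring
    rw [e2, sum_range_add']
    have he : ∀ k, k < 2 ^ N →
        (∑ l ∈ Finset.range (N + 1), c l * (k / 2 ^ (N + 1 - 1 - l) % 2))
          = ∑ l ∈ Finset.range N, c (l + 1) * (k / 2 ^ (N - 1 - l) % 2) ∧
        (∑ l ∈ Finset.range (N + 1), c l * ((2 ^ N + k) / 2 ^ (N + 1 - 1 - l) % 2))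
          = c 0 + ∑ l ∈ Finset.range N, c (l + 1) * (k / 2 ^ (N - 1 - l) % 2) := by
      intro k hk
      have hbit : ∀ l, l < N →
          k / 2 ^ (N + 1 - 1 - (l + 1)) % 2 = k / 2 ^ (N - 1 - l) % 2 ∧
          (2 ^ N + k) / 2 ^ (N + 1 - 1 - (l + 1)) % 2 = k / 2 ^ (N - 1 - l) % 2 := by
        intro l hl
        have h1 : N + 1 - 1 - (l + 1) = N - 1 - l := by omega
        constructor
        · rw [h1]
        · rw [h1]
          set j := N - 1 - l with hj
          have hNj : 2 ^ N = 2 ^ j * 2 ^ (N - j) := by rw [← pow_add]; congr 1; omega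
          have hdiv : (2 ^ N + k) / 2 ^ j = 2 ^ (N - j) + k / 2 ^ j := by
            rw [hNj, Nat.mul_add_div (Nat.two_pow_pos _)]
          rw [hdiv]
          have : 2 ^ (N - j) = 2 * 2 ^ (N - j - 1) := by
            rw [← pow_succ']; congr 1; omega
          omega
      have htop1 : k / 2 ^ (N + 1 - 1 - 0) % 2 = 0 := by
        simp [Nat.div_eq_of_lt hk]
      have htop2 : (2 ^ N + k) / 2 ^ (N + 1 - 1 - 0) % 2 = 1 := by
        simp only [Nat.add_sub_cancel, Nat.sub_zero]
        rw [add_comm, Nat.add_div_right _ (Nat.two_pow_pos _), Nat.div_eq_of_lt hk]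
      have h2N : (2 ^ N + k) / 2 ^ N = 1 := by
        rw [add_comm, Nat.add_div_right _ (Nat.two_pow_pos _), Nat.div_eq_of_lt hk]
      constructor
      · rw [Finset.sum_range_succ']
        rw [Finset.sum_congr rfl (fun l hl => by rw [(hbit l (Finset.mem_range.mp hl)).1])]
        simp [Nat.div_eq_of_lt hk]
      · rw [Finset.sum_range_succ']
        rw [Finset.sum_congr rfl (fun l hl => by rw [(hbit l (Finset.mem_range.mp hl)).2])]
        simp [h2N, Nat.div_eq_of_lt hk, add_comm]
    have hc : ∑ k ∈ Finset.range (2 ^ N),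
          ((-1:ℝ)) ^ (∑ l ∈ Finset.range (N+1), c l * (k / 2 ^ (N + 1 - 1 - l) % 2))
        + ∑ k ∈ Finset.range (2 ^ N),
          ((-1:ℝ)) ^ (∑ l ∈ Finset.range (N+1), c l * ((2 ^ N + k) / 2 ^ (N + 1 - 1 - l) % 2))
        = (1 + (-1:ℝ) ^ (c 0)) * ∑ k ∈ Finset.range (2 ^ N),
            ((-1:ℝ)) ^ (∑ l ∈ Finset.range N, (fun l => c (l+1)) l * (k / 2 ^ (N - 1 - l) % 2)) := by
      rw [Finset.mul_sum, ← Finset.sum_add_distrib]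
      refine Finset.sum_congr rfl (fun k hk => ?_)
      obtain ⟨h1, h2⟩ := he k (Finset.mem_range.mp hk)
      rw [h1, h2, pow_add]
      ring
    rw [hc]
    rcases Nat.even_or_odd (c 0) with h0 | h0
    · rcases Nat.eq_zero_or_pos l0 with rfl | hl0'
      · exfalso; rw [Nat.even_iff] at h0; omega
      · rw [ih (fun l => c (l + 1)) ⟨l0 - 1, by omega, by show c (l0 - 1 + 1) % 2 = 1; rwa [Nat.sub_add_cancel hl0']⟩, mul_zero]
    · rw [h0.neg_one_pow]; ring

lemma Ico_cover (N : ℕ) :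
    Set.Ico (0:ℝ) 1 = ⋃ k ∈ Finset.range (2^N), Set.Ico ((k:ℝ)/2^N) (((k:ℕ) + 1 : ℝ)/2^N) := by
  ext x
  simp only [Set.mem_iUnion, Finset.mem_range, Set.mem_Ico]
  constructor
  · rintro ⟨hx0, hx1⟩
    refine ⟨⌊x * 2^N⌋₊, ?_, ?_, ?_⟩
    · have : x * 2^N < 2^N := by nlinarith [pow_pos (zero_lt_two (α := ℝ)) N]
      have h := Nat.floor_lt (by positivity) |>.mpr (by exact_mod_cast this : x * 2^N < ((2^N : ℕ) : ℝ))
      exact h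
    · rw [div_le_iff₀ (by positivity)]
      exact Nat.floor_le (by positivity)
    · rw [lt_div_iff₀ (by positivity)]
      exact Nat.lt_floor_add_one _
  · rintro ⟨k, hk, h1, h2⟩
    refine ⟨le_trans (by positivity) h1, lt_of_lt_of_le h2 ?_⟩
    rw [div_le_one (by positivity)]
    exact_mod_cast Nat.succ_le_of_lt hk

lemma integral_prod_myZ (T : Finset ℕ) (hT : T.Nonempty) :
    ∫ x in Set.Ioo (0:ℝ) 1, ∏ n ∈ T, myZ n x = 0 := by
  set N := T.max' hT + 1 with hN
  set c : ℕ → ℕ := fun l => ∑ n ∈ T, Nat.choose n l with hcdef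
  have hconst : ∀ k : ℕ, k < 2^N → ∀ x ∈ Set.Ico ((k:ℝ)/2^N) (((k:ℝ) + 1)/2^N),
      ∏ n ∈ T, myZ n x = (-1:ℝ)^(∑ l ∈ Finset.range N, c l * (k / 2^(N-1-l) % 2)) := by
    intro k hk x hx
    unfold myZ
    rw [Finset.prod_pow_eq_pow_sum]
    congr 1
    have hinner : ∀ n ∈ T, ∑ l ∈ Finset.range (n+1), Nat.choose n l * binDigit x (l+1)
        = ∑ l ∈ Finset.range N, Nat.choose n l * (k / 2^(N-1-l) % 2) := by
      intro n hn
      have hnN : n + 1 ≤ N := by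
        have := T.le_max' n hn; omega
      rw [Finset.sum_subset (Finset.range_subset_range.mpr hnN)]
      · refine Finset.sum_congr rfl (fun l hl => ?_)
        have hlN : l < N := Finset.mem_range.mp hl
        rw [digit_on_Ico hk (Nat.succ_le_succ (Nat.zero_le l)) (by omega) hx,
          show N - (l + 1) = N - 1 - l from by omega]
      · intro l _ hl
        rw [Nat.choose_eq_zero_of_lt (by simpa using Finset.mem_range.not.mp hl), zero_mul]
    rw [Finset.sum_congr rfl hinner, Finset.sum_comm]
    refine Finset.sum_congr rfl (fun l _ => ?_)
    simp only [hcdef]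
    rw [Finset.sum_mul]
  have hodd : c (N - 1) % 2 = 1 := by
    simp only [hcdef]
    rw [Finset.sum_eq_single (T.max' hT)]
    · simp [hN]
    · intro n hn hne
      exact Nat.choose_eq_zero_of_lt (by simpa [hN] using lt_of_le_of_ne (T.le_max' n hn) hne)
    · intro h; exact absurd (T.max'_mem hT) h
  have hIoo : ∫ x in Set.Ioo (0:ℝ) 1, ∏ n ∈ T, myZ n x
      = ∫ x in Set.Ico (0:ℝ) 1, ∏ n ∈ T, myZ n x := integral_Ico_eq_integral_Ioo.symm
  rw [hIoo, Ico_cover N, MeasureTheory.integral_biUnion_finset]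
  · have hpc : ∀ k ∈ Finset.range (2^N),
        ∫ x in Set.Ico ((k:ℝ)/2^N) (((k:ℕ) + 1 : ℝ)/2^N), ∏ n ∈ T, myZ n x
        = (1/2^N) * (-1:ℝ)^(∑ l ∈ Finset.range N, c l * (k / 2^(N-1-l) % 2)) := by
      intro k hk
      rw [MeasureTheory.setIntegral_congr_fun measurableSet_Ico
        (fun x hx => hconst k (Finset.mem_range.mp hk) x hx)]
      rw [MeasureTheory.setIntegral_const, Real.volume_real_Ico, smul_eq_mul]
      congr 1
      rw [show ((k:ℝ) + 1)/2^N - (k:ℝ)/2^N = 1/2^N from by ring,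
        max_eq_left (by positivity)]
    rw [Finset.sum_congr rfl hpc, ← Finset.mul_sum,
      char_sum N c ⟨N - 1, by omega, hodd⟩, mul_zero]
  · exact fun k _ => measurableSet_Ico
  · intro k hk k' hk' hne
    simp only [Function.onFun]
    rw [Set.Ico_disjoint_Ico]
    rcases lt_or_gt_of_ne hne with h | h
    · refine inf_le_left.trans (le_trans ?_ le_sup_right)
      gcongr
      exact_mod_cast Nat.succ_le_of_lt h
    · refine inf_le_right.trans (le_trans ?_ le_sup_left)
      gcongr
      exact_mod_cast Nat.succ_le_of_lt h
  · intro k _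
    refine ⟨(Finset.measurable_prod T (fun n _ => measurable_myZ n)).aestronglyMeasurable, ?_⟩
    refine MeasureTheory.HasFiniteIntegral.of_bounded (C := 1) (ae_of_all _ (fun x => ?_))
    rw [Real.norm_eq_abs, Finset.abs_prod]
    calc ∏ n ∈ T, |myZ n x| = ∏ n ∈ T, 1 := Finset.prod_congr rfl (fun n _ => abs_myZ n x)
      _ ≤ 1 := by rw [Finset.prod_const_one]

lemma integrable_quad (n1 n2 n3 n4 : ℕ) :
    Integrable (fun x => myZ n1 x * myZ n2 x * myZ n3 x * myZ n4 x)
      (volume.restrict (Set.Ioo (0:ℝ) 1)) := by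
  refine ⟨((((measurable_myZ n1).mul (measurable_myZ n2)).mul (measurable_myZ n3)).mul
    (measurable_myZ n4)).aestronglyMeasurable, ?_⟩
  refine MeasureTheory.HasFiniteIntegral.of_bounded (C := 1) (ae_of_all _ (fun x => ?_))
  rw [Real.norm_eq_abs, abs_mul, abs_mul, abs_mul, abs_myZ, abs_myZ, abs_myZ, abs_myZ]
  norm_num

lemma volume_Ioo01 : ∫ x in Set.Ioo (0:ℝ) 1, (1:ℝ) = 1 := by
  rw [MeasureTheory.setIntegral_const, Real.volume_real_Ioo, smul_eq_mul]
  norm_num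

lemma myIntegral_pair (a b : ℕ) :
    ∫ x in Set.Ioo (0:ℝ) 1, myZ a x * myZ b x = if a = b then 1 else 0 := by
  by_cases h : a = b
  · subst h
    rw [if_pos rfl, MeasureTheory.setIntegral_congr_fun measurableSet_Ioo
      (fun x _ => myZ_sq a x), volume_Ioo01]
  · rw [if_neg h]
    have := integral_prod_myZ {a, b} ⟨a, by simp⟩
    refine Eq.trans ?_ this
    exact MeasureTheory.setIntegral_congr_fun measurableSet_Ioo
      (fun x _ => by rw [Finset.prod_insert (by simpa using h), Finset.prod_singleton])

lemma integral_quad_le (n1 n2 n3 n4 : ℕ) :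
    ∫ x in Set.Ioo (0:ℝ) 1, myZ n1 x * myZ n2 x * myZ n3 x * myZ n4 x
      ≤ (if n1 = n2 ∧ n3 = n4 then (1:ℝ) else 0) + (if n1 = n3 ∧ n2 = n4 then 1 else 0)
        + (if n1 = n4 ∧ n2 = n3 then 1 else 0) := by
  have hnn : (0:ℝ) ≤ (if n1 = n2 ∧ n3 = n4 then (1:ℝ) else 0) + (if n1 = n3 ∧ n2 = n4 then 1 else 0)
        + (if n1 = n4 ∧ n2 = n3 then 1 else 0) := by positivity
  have hred : ∀ (a b c d : ℕ), a = b →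
      ∫ x in Set.Ioo (0:ℝ) 1, myZ a x * myZ b x * myZ c x * myZ d x
        = if c = d then (1:ℝ) else 0 := by
    intro a b c d hab
    subst hab
    rw [MeasureTheory.setIntegral_congr_fun measurableSet_Ioo
      (fun x _ => by rw [show myZ a x * myZ a x * myZ c x * myZ d x
        = myZ c x * myZ d x from by rw [show myZ a x * myZ a x * myZ c x * myZ d x
          = (myZ a x * myZ a x) * (myZ c x * myZ d x) from by ring, myZ_sq, one_mul]])]
    exact myIntegral_pair c d
  by_cases h12 : n1 = n2
  · rw [hred n1 n2 n3 n4 h12]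
    by_cases h34 : n3 = n4
    · have e1 : (if n1 = n2 ∧ n3 = n4 then (1:ℝ) else 0) = 1 := if_pos ⟨h12, h34⟩
      have e2 : (if n3 = n4 then (1:ℝ) else 0) = 1 := if_pos h34
      have h1 : (0:ℝ) ≤ (if n1 = n3 ∧ n2 = n4 then (1:ℝ) else 0) := by positivity
      have h2 : (0:ℝ) ≤ (if n1 = n4 ∧ n2 = n3 then (1:ℝ) else 0) := by positivity
      rw [e2]; rw [e1]; linarith
    · rw [if_neg h34]
      exact hnn
  · -- n1 ≠ n2
    by_cases h13 : n1 = n3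
    · have heq : ∫ x in Set.Ioo (0:ℝ) 1, myZ n1 x * myZ n2 x * myZ n3 x * myZ n4 x
          = if n2 = n4 then (1:ℝ) else 0 := by
        rw [MeasureTheory.setIntegral_congr_fun measurableSet_Ioo (fun x _ => by
          rw [show myZ n1 x * myZ n2 x * myZ n3 x * myZ n4 x
            = (myZ n3 x * myZ n3 x) * (myZ n2 x * myZ n4 x) from by rw [h13]; ring,
            myZ_sq, one_mul])]
        exact myIntegral_pair n2 n4
      rw [heq]
      by_cases h24 : n2 = n4
      · have e1 : (if n1 = n3 ∧ n2 = n4 then (1:ℝ) else 0) = 1 := if_pos ⟨h13, h24⟩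
        have e2 : (if n2 = n4 then (1:ℝ) else 0) = 1 := if_pos h24
        have h1 : (0:ℝ) ≤ (if n1 = n2 ∧ n3 = n4 then (1:ℝ) else 0) := by positivity
        have h2 : (0:ℝ) ≤ (if n1 = n4 ∧ n2 = n3 then (1:ℝ) else 0) := by positivity
        rw [e2]; rw [e1]; linarith
      · rw [if_neg h24]; exact hnn
    · by_cases h14 : n1 = n4
      · have heq : ∫ x in Set.Ioo (0:ℝ) 1, myZ n1 x * myZ n2 x * myZ n3 x * myZ n4 x
            = if n2 = n3 then (1:ℝ) else 0 := by
          rw [MeasureTheory.setIntegral_congr_fun measurableSet_Ioo (fun x _ => by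
            rw [show myZ n1 x * myZ n2 x * myZ n3 x * myZ n4 x
              = (myZ n4 x * myZ n4 x) * (myZ n2 x * myZ n3 x) from by rw [h14]; ring,
              myZ_sq, one_mul])]
          exact myIntegral_pair n2 n3
        rw [heq]
        by_cases h23 : n2 = n3
        · have e1 : (if n1 = n4 ∧ n2 = n3 then (1:ℝ) else 0) = 1 := if_pos ⟨h14, h23⟩
          have e2 : (if n2 = n3 then (1:ℝ) else 0) = 1 := if_pos h23
          have h1 : (0:ℝ) ≤ (if n1 = n2 ∧ n3 = n4 then (1:ℝ) else 0) := by positivity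
          have h2 : (0:ℝ) ≤ (if n1 = n3 ∧ n2 = n4 then (1:ℝ) else 0) := by positivity
          rw [e2]; rw [e1]; linarith
        · rw [if_neg h23]; exact hnn
      · -- n1 distinct from n2 n3 n4
        have hzero : ∫ x in Set.Ioo (0:ℝ) 1, myZ n1 x * myZ n2 x * myZ n3 x * myZ n4 x = 0 := by
          by_cases h23 : n2 = n3
          · rw [MeasureTheory.setIntegral_congr_fun measurableSet_Ioo (fun x _ => by
              rw [show myZ n1 x * myZ n2 x * myZ n3 x * myZ n4 x
                = (myZ n3 x * myZ n3 x) * (myZ n1 x * myZ n4 x) from by rw [h23]; ring,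
                myZ_sq, one_mul])]
            rw [myIntegral_pair n1 n4, if_neg h14]
          · by_cases h24 : n2 = n4
            · rw [MeasureTheory.setIntegral_congr_fun measurableSet_Ioo (fun x _ => by
                rw [show myZ n1 x * myZ n2 x * myZ n3 x * myZ n4 x
                  = (myZ n4 x * myZ n4 x) * (myZ n1 x * myZ n3 x) from by rw [h24]; ring,
                  myZ_sq, one_mul])]
              rw [myIntegral_pair n1 n3, if_neg h13]
            · by_cases h34 : n3 = n4
              · rw [MeasureTheory.setIntegral_congr_fun measurableSet_Ioo (fun x _ => by
                  rw [show myZ n1 x * myZ n2 x * myZ n3 x * myZ n4 x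
                    = (myZ n4 x * myZ n4 x) * (myZ n1 x * myZ n2 x) from by rw [h34]; ring,
                    myZ_sq, one_mul])]
                rw [myIntegral_pair n1 n2, if_neg h12]
              · -- all distinct
                have := integral_prod_myZ {n1, n2, n3, n4} ⟨n1, by simp⟩
                refine Eq.trans (MeasureTheory.setIntegral_congr_fun measurableSet_Ioo
                  (fun x _ => ?_)) this
                rw [Finset.prod_insert (by simp [h12, h13, h14]),
                  Finset.prod_insert (by simp [h23, h24]),
                  Finset.prod_insert (by simpa using h34), Finset.prod_singleton]
                ring
        rw [hzero]
        exact hnn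

lemma ite_and_mul_real (P Q : Prop) [Decidable P] [Decidable Q] :
    (if P ∧ Q then (1:ℝ) else 0) = (if P then 1 else 0) * (if Q then 1 else 0) := by
  by_cases hP : P <;> by_cases hQ : Q <;> simp [hP, hQ]

lemma sum_diag_ite (p : ℕ) :
    ∑ q ∈ Finset.range p ×ˢ Finset.range p, (if q.1 = q.2 then (1:ℝ) else 0) = p := by
  rw [Finset.sum_product]
  have : ∀ i ∈ Finset.range p, ∑ j ∈ Finset.range p, (if i = j then (1:ℝ) else 0) = 1 := by
    intro i hi
    rw [Finset.sum_ite_eq (Finset.range p) i (fun _ => (1:ℝ)), if_pos hi]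
  rw [Finset.sum_congr rfl this, Finset.sum_const, Finset.card_range, nsmul_eq_mul, mul_one]

lemma moment4 (p : ℕ) :
    ∫ x in Set.Ioo (0:ℝ) 1, (∑ n ∈ Finset.range p, myZ n x)^4 ≤ 3 * (p:ℝ)^2 := by
  set B := Finset.range p ×ˢ Finset.range p with hB
  have hexp : ∀ x : ℝ, (∑ n ∈ Finset.range p, myZ n x)^4
      = ∑ r ∈ B ×ˢ B, myZ r.1.1 x * myZ r.1.2 x * myZ r.2.1 x * myZ r.2.2 x := by
    intro x
    have h2 : (∑ n ∈ Finset.range p, myZ n x)^2 = ∑ q ∈ B, myZ q.1 x * myZ q.2 x := by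
      rw [sq, Finset.sum_mul_sum, hB, Finset.sum_product]
    calc (∑ n ∈ Finset.range p, myZ n x)^4
        = ∑ q1 ∈ B, ∑ q2 ∈ B, (myZ q1.1 x * myZ q1.2 x) * (myZ q2.1 x * myZ q2.2 x) := by
          rw [show ((∑ n ∈ Finset.range p, myZ n x)^4)
            = ((∑ n ∈ Finset.range p, myZ n x)^2)^2 from by ring, h2, sq, Finset.sum_mul_sum]
      _ = ∑ r ∈ B ×ˢ B, myZ r.1.1 x * myZ r.1.2 x * myZ r.2.1 x * myZ r.2.2 x := by
          rw [Finset.sum_product (s := B) (t := B)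
            (f := fun r => myZ r.1.1 x * myZ r.1.2 x * myZ r.2.1 x * myZ r.2.2 x)]
          exact Finset.sum_congr rfl (fun q1 _ => Finset.sum_congr rfl (fun q2 _ => by
            show (myZ q1.1 x * myZ q1.2 x) * (myZ q2.1 x * myZ q2.2 x)
              = myZ q1.1 x * myZ q1.2 x * myZ q2.1 x * myZ q2.2 x
            ring))
  have hswap : ∫ x in Set.Ioo (0:ℝ) 1, (∑ n ∈ Finset.range p, myZ n x)^4
      = ∑ r ∈ B ×ˢ B, ∫ x in Set.Ioo (0:ℝ) 1,
          myZ r.1.1 x * myZ r.1.2 x * myZ r.2.1 x * myZ r.2.2 x := by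
    rw [MeasureTheory.setIntegral_congr_fun measurableSet_Ioo (fun x _ => hexp x)]
    exact MeasureTheory.integral_finset_sum _ (fun r _ => integrable_quad r.1.1 r.1.2 r.2.1 r.2.2)
  rw [hswap]
  have hbd : ∑ r ∈ B ×ˢ B, ∫ x in Set.Ioo (0:ℝ) 1,
        myZ r.1.1 x * myZ r.1.2 x * myZ r.2.1 x * myZ r.2.2 x
      ≤ ∑ r ∈ B ×ˢ B, ((if r.1.1 = r.1.2 ∧ r.2.1 = r.2.2 then (1:ℝ) else 0)
        + (if r.1.1 = r.2.1 ∧ r.1.2 = r.2.2 then 1 else 0)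
        + (if r.1.1 = r.2.2 ∧ r.1.2 = r.2.1 then 1 else 0)) :=
    Finset.sum_le_sum (fun r _ => integral_quad_le r.1.1 r.1.2 r.2.1 r.2.2)
  refine le_trans hbd ?_
  rw [Finset.sum_add_distrib, Finset.sum_add_distrib]
  have hE1 : ∑ r ∈ B ×ˢ B, (if r.1.1 = r.1.2 ∧ r.2.1 = r.2.2 then (1:ℝ) else 0) = (p:ℝ)^2 := by
    rw [Finset.sum_product (s := B) (t := B)]
    simp only [ite_and_mul_real]
    rw [← Finset.sum_mul_sum B B (fun q => if q.1 = q.2 then (1:ℝ) else 0)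
      (fun q => if q.1 = q.2 then (1:ℝ) else 0), hB, sum_diag_ite, sq]
  have hE2 : ∑ r ∈ B ×ˢ B, (if r.1.1 = r.2.1 ∧ r.1.2 = r.2.2 then (1:ℝ) else 0) = (p:ℝ)^2 := by
    rw [Finset.sum_product (s := B) (t := B)]
    have h : ∀ q1 ∈ B, ∑ q2 ∈ B, (if q1.1 = q2.1 ∧ q1.2 = q2.2 then (1:ℝ) else 0) = 1 := by
      intro q1 hq1
      have he : ∀ q2 : ℕ × ℕ, (q1.1 = q2.1 ∧ q1.2 = q2.2) = (q1 = q2) := by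
        intro q2; rw [eq_iff_iff]; exact (Prod.ext_iff).symm
      simp only [he]
      rw [Finset.sum_ite_eq B q1 (fun _ => (1:ℝ)), if_pos hq1]
    rw [Finset.sum_congr rfl h, Finset.sum_const, hB, Finset.card_product, Finset.card_range,
      nsmul_eq_mul, mul_one, sq]
    push_cast
    ring
  have hE3 : ∑ r ∈ B ×ˢ B, (if r.1.1 = r.2.2 ∧ r.1.2 = r.2.1 then (1:ℝ) else 0) = (p:ℝ)^2 := by
    rw [Finset.sum_product (s := B) (t := B)]
    have h : ∀ q1 ∈ B, ∑ q2 ∈ B, (if q1.1 = q2.2 ∧ q1.2 = q2.1 then (1:ℝ) else 0) = 1 := by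
      intro q1 hq1
      have hq1' : (q1.2, q1.1) ∈ B := by
        rw [hB] at hq1 ⊢
        rw [Finset.mem_product] at hq1 ⊢
        exact ⟨hq1.2, hq1.1⟩
      have he : ∀ q2 : ℕ × ℕ, (q1.1 = q2.2 ∧ q1.2 = q2.1) = ((q1.2, q1.1) = q2) := by
        intro q2
        rw [eq_iff_iff, Prod.ext_iff]
        constructor <;> (rintro ⟨h1, h2⟩; exact ⟨h2, h1⟩)
      simp only [he]
      rw [Finset.sum_ite_eq B _ (fun _ => (1:ℝ)), if_pos hq1']
    rw [Finset.sum_congr rfl h, Finset.sum_const, hB, Finset.card_product, Finset.card_range,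
      nsmul_eq_mul, mul_one, sq]
    push_cast
    ring
  rw [hE1, hE2, hE3]
  nlinarith [sq_nonneg (p:ℝ)]

lemma measurable_S (p : ℕ) : Measurable (fun x : ℝ => ∑ n ∈ Finset.range p, myZ n x) :=
  Finset.measurable_sum _ (fun n _ => measurable_myZ n)

lemma abs_S_le (p : ℕ) (x : ℝ) : |∑ n ∈ Finset.range p, myZ n x| ≤ p := by
  calc |∑ n ∈ Finset.range p, myZ n x| ≤ ∑ n ∈ Finset.range p, |myZ n x| :=
        Finset.abs_sum_le_sum_abs _ _
    _ = ∑ n ∈ Finset.range p, 1 := Finset.sum_congr rfl (fun n _ => abs_myZ n x)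
    _ = p := by rw [Finset.sum_const, Finset.card_range, nsmul_eq_mul, mul_one]

lemma key_ae : ∀ᵐ x ∂(MeasureTheory.volume.restrict (Set.Ioo (0:ℝ) 1)),
    Tendsto (fun p : ℕ => (∑ n ∈ Finset.range p, myZ n x) / p) atTop (nhds 0) := by
  set μ := MeasureTheory.volume.restrict (Set.Ioo (0:ℝ) 1) with hμ
  set G : ℕ → ℝ → ℝ := fun p x => ((∑ n ∈ Finset.range p, myZ n x) / p)^4 with hG
  have hGm : ∀ p, Measurable (G p) := fun p => ((measurable_S p).div_const _).pow_const 4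
  have hGnn : ∀ p x, 0 ≤ G p x := by
    intro p x
    simp only [hG]
    positivity
  have hGb : ∀ p x, |G p x| ≤ 1 := by
    intro p x
    simp only [hG]
    rw [abs_pow, abs_div]
    rcases Nat.eq_zero_or_pos p with rfl | hp
    · simp
    · have h1 : |(∑ n ∈ Finset.range p, myZ n x)| / |(p:ℝ)| ≤ 1 := by
        rw [abs_of_nonneg (by positivity : (0:ℝ) ≤ (p:ℝ)), div_le_one (by exact_mod_cast hp)]
        exact abs_S_le p x
      calc (|(∑ n ∈ Finset.range p, myZ n x)| / |(p:ℝ)|)^4 ≤ 1^4 := by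
            apply pow_le_pow_left₀ (by positivity) h1
        _ = 1 := one_pow 4
  have hGint : ∀ p, Integrable (G p) μ := by
    intro p
    refine ⟨(hGm p).aestronglyMeasurable, ?_⟩
    exact MeasureTheory.HasFiniteIntegral.of_bounded (C := 1)
      (ae_of_all _ (fun x => by rw [Real.norm_eq_abs]; exact hGb p x))
  have hbound : ∀ p : ℕ, ∫ x, G p x ∂μ ≤ 3 / (p:ℝ)^2 := by
    intro p
    rcases Nat.eq_zero_or_pos p with rfl | hp
    · simp [hG]
    · have hp' : (0:ℝ) < (p:ℝ) := by exact_mod_cast hp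
      have : ∀ x : ℝ, G p x = ((p:ℝ)^4)⁻¹ * (∑ n ∈ Finset.range p, myZ n x)^4 := by
        intro x
        simp only [hG]
        rw [div_pow]
        field_simp
      rw [MeasureTheory.integral_congr_ae (ae_of_all _ this), MeasureTheory.integral_const_mul]
      have h4 := moment4 p
      calc ((p:ℝ)^4)⁻¹ * ∫ x, (∑ n ∈ Finset.range p, myZ n x)^4 ∂μ
          ≤ ((p:ℝ)^4)⁻¹ * (3 * (p:ℝ)^2) := by
            apply mul_le_mul_of_nonneg_left _ (by positivity)
            exact h4
        _ = 3 / (p:ℝ)^2 := by field_simp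
  have hsummable : Summable (fun p : ℕ => 3 / (p:ℝ)^2) := by
    have h := (Real.summable_one_div_nat_pow (p := 2)).mpr one_lt_two
    have h2 : ∀ p : ℕ, 3 / ((p:ℝ))^2 = 3 * (1 / (p:ℝ)^2) := fun p => by ring
    rw [funext h2]
    apply Summable.mul_left
    exact_mod_cast h
  have htsum : ∑' p : ℕ, ∫⁻ x, ENNReal.ofReal (G p x) ∂μ ≠ ⊤ := by
    have hle : ∀ p : ℕ, ∫⁻ x, ENNReal.ofReal (G p x) ∂μ ≤ ENNReal.ofReal (3 / (p:ℝ)^2) := by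
      intro p
      rw [← MeasureTheory.ofReal_integral_eq_lintegral_ofReal (hGint p)
        (ae_of_all _ (hGnn p))]
      exact ENNReal.ofReal_le_ofReal (hbound p)
    refine ne_top_of_le_ne_top ?_ (ENNReal.tsum_le_tsum hle)
    rw [← ENNReal.ofReal_tsum_of_nonneg (fun p => by positivity) hsummable]
    exact ENNReal.ofReal_ne_top
  have hlint : ∫⁻ x, ∑' p : ℕ, ENNReal.ofReal (G p x) ∂μ ≠ ⊤ := by
    rw [MeasureTheory.lintegral_tsum (fun p => (hGm p).ennreal_ofReal.aemeasurable)]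
    exact htsum
  have hae := MeasureTheory.ae_lt_top
    (Measurable.ennreal_tsum (fun p => (hGm p).ennreal_ofReal)) hlint
  filter_upwards [hae] with x hx
  have hsx : Summable (fun p => G p x) := by
    have h1 := ENNReal.summable_toReal hx.ne
    have h2 : ∀ p : ℕ, (ENNReal.ofReal (G p x)).toReal = G p x :=
      fun p => ENNReal.toReal_ofReal (hGnn p x)
    exact h1.congr h2
  have hG0 : Tendsto (fun p => G p x) atTop (nhds 0) := hsx.tendsto_atTop_zero
  have habs : Tendsto (fun p : ℕ => |(∑ n ∈ Finset.range p, myZ n x) / p|) atTop (nhds 0) := by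
    have hrw : ∀ p : ℕ, |(∑ n ∈ Finset.range p, myZ n x) / p| = (G p x) ^ ((1:ℝ)/4) := by
      intro p
      set u := (∑ n ∈ Finset.range p, myZ n x) / p
      have h1 : G p x = |u|^(4:ℕ) := by
        simp only [hG]
        rw [pow_abs, abs_of_nonneg (by positivity : (0:ℝ) ≤ u^4)]
      rw [h1, ← Real.rpow_natCast |u| 4, ← Real.rpow_mul (abs_nonneg u)]
      norm_num
    have hcont : Tendsto (fun t : ℝ => t ^ ((1:ℝ)/4)) (nhds 0) (nhds 0) := by
      have := (Real.continuousAt_rpow_const 0 ((1:ℝ)/4) (Or.inr (by norm_num))).tendsto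
      rwa [Real.zero_rpow (by norm_num)] at this
    rw [funext hrw]
    exact hcont.comp hG0
  have hneg : Tendsto (fun p : ℕ => -|(∑ n ∈ Finset.range p, myZ n x) / p|) atTop (nhds 0) := by
    have := habs.neg
    rwa [neg_zero] at this
  exact tendsto_of_tendsto_of_tendsto_of_le_of_le hneg habs
    (fun p => neg_abs_le _) (fun p => le_abs_self _)


/-- For Lebesgue-a.e. `x ∈ (0,1)`, the asymptotic density of the set of `n` with
`∑_{l=0}^{n} C(n,l)·x_{l+1} ≡ 0 (mod 2)` equals `1/2`. -/
theorem density_binomial_sum_even :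
    ∀ᵐ x ∂(MeasureTheory.volume.restrict (Set.Ioo (0:ℝ) 1)),
      Tendsto (fun p : ℕ =>
        (((Finset.range p).filter (fun n =>
          (∑ l ∈ Finset.range (n + 1), Nat.choose n l * binDigit x (l + 1)) % 2 = 0)).card : ℝ)
          / p) atTop (nhds (1 / 2)) := by
  filter_upwards [key_ae] with x hx
  have hcount : ∀ p : ℕ,
      (((Finset.range p).filter (fun n =>
        (∑ l ∈ Finset.range (n + 1), Nat.choose n l * binDigit x (l + 1)) % 2 = 0)).card : ℝ)
      = ((p:ℝ) + ∑ n ∈ Finset.range p, myZ n x) / 2 := by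
    intro p
    rw [Finset.card_filter, Nat.cast_sum]
    have hterm : ∀ n ∈ Finset.range p,
        (((if (∑ l ∈ Finset.range (n + 1), Nat.choose n l * binDigit x (l + 1)) % 2 = 0
          then 1 else 0 : ℕ) : ℝ)) = (1 + myZ n x) / 2 := by
      intro n _
      by_cases h : (∑ l ∈ Finset.range (n + 1), Nat.choose n l * binDigit x (l + 1)) % 2 = 0
      · rw [if_pos h, myZ_eq, h]
        norm_num
      · have h1 : (∑ l ∈ Finset.range (n + 1), Nat.choose n l * binDigit x (l + 1)) % 2 = 1 := by
          omega
        rw [if_neg h, myZ_eq, h1]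
        norm_num
    rw [Finset.sum_congr rfl hterm]
    rw [← Finset.sum_div, Finset.sum_add_distrib, Finset.sum_const, Finset.card_range,
      nsmul_eq_mul, mul_one]
  have hev : ∀ᶠ p : ℕ in atTop, (((Finset.range p).filter (fun n =>
      (∑ l ∈ Finset.range (n + 1), Nat.choose n l * binDigit x (l + 1)) % 2 = 0)).card : ℝ) / p
      = 1 / 2 + ((∑ n ∈ Finset.range p, myZ n x) / p) / 2 := by
    filter_upwards [eventually_ge_atTop 1] with p hp
    have hp' : ((p:ℝ)) ≠ 0 := by
      have : (0:ℝ) < p := by exact_mod_cast hp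
      linarith
    have hp0 : (0:ℝ) < p := by exact_mod_cast hp
    rw [hcount p, div_div]
    rw [show (1:ℝ)/2 + ((∑ n ∈ Finset.range p, myZ n x) / p) / 2
      = (1 + (∑ n ∈ Finset.range p, myZ n x) / p) / 2 from by ring]
    rw [div_eq_div_iff (by positivity) (by norm_num : (2:ℝ) ≠ 0)]
    field_simp
  have hlim : Tendsto (fun p : ℕ => 1 / 2 + ((∑ n ∈ Finset.range p, myZ n x) / p) / 2)
      atTop (nhds (1 / 2)) := by
    have h := (tendsto_const_nhds (x := (1/2 : ℝ)) (f := (atTop : Filter ℕ))).add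
      (hx.div_const 2)
    simpa using h
  exact Tendsto.congr' (EventuallyEq.symm hev) hlim
end

section
/- Let T : (ℤ/aℤ)^ℤ → (ℤ/aℤ)^ℤ be the linear cellular automaton (T x)_n = ∑_{i=-r}^{r} λ_i x_{n+i} (mod a) with both λ_{-r} and λ_r units in ℤ/aℤ and r ≥ 1. Then T is surjective. -/
/-- Two-sided recursive solution of the linear recurrence. -/
noncomputable def lcaSoln (a r : ℕ) (hr : 1 ≤ r) (lam y : ℤ → ZMod a) : ℤ → ZMod a
  | k =>
    if _h : (r : ℤ) ≤ k then
      (lam (r : ℤ))⁻¹ * (y (k - r) -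
        ∑ i ∈ (Finset.Icc (-(r : ℤ)) ((r : ℤ) - 1)).attach,
          lam i.1 * lcaSoln a r hr lam y (k - (r : ℤ) + i.1))
    else if _h2 : k < -(r : ℤ) then
      (lam (-(r : ℤ)))⁻¹ * (y (k + r) -
        ∑ i ∈ (Finset.Icc (-(r : ℤ) + 1) (r : ℤ)).attach,
          lam i.1 * lcaSoln a r hr lam y (k + (r : ℤ) + i.1))
    else 0
termination_by k => (if 0 ≤ k then k else -k - 1).toNat
decreasing_by
  all_goals
    have hi := Finset.mem_Icc.mp i.2
    split_ifs <;> omega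

/-- The linear cellular automaton `(Tx)_n = ∑_{i=-r}^{r} λ_i x_{n+i} (mod a)` with both
`λ_{-r}` and `λ_r` units in `ℤ/aℤ` and `r ≥ 1` is surjective. -/
theorem lca_surjective (a r : ℕ) (ha : 2 ≤ a) (hr : 1 ≤ r) (lam : ℤ → ZMod a)
    (h₁ : IsUnit (lam (-(r : ℤ)))) (h₂ : IsUnit (lam (r : ℤ)))
    (T : (ℤ → ZMod a) → (ℤ → ZMod a))
    (hT : ∀ x n, T x n = ∑ i ∈ Finset.Icc (-(r : ℤ)) (r : ℤ), lam i * x (n + i)) :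
    Function.Surjective T := by
  intro y
  set x := lcaSoln a r hr lam y with hx
  refine ⟨x, ?_⟩
  funext n
  rw [hT]
  rcases le_or_gt 0 n with hn | hn
  · -- use forward recursion at k = n + r
    have e1 : x (n + r) = (lam (r : ℤ))⁻¹ * (y n -
        ∑ i ∈ Finset.Icc (-(r : ℤ)) ((r : ℤ) - 1), lam i * x (n + i)) := by
      rw [hx, lcaSoln, dif_pos (by omega : (r : ℤ) ≤ n + r)]
      have h0 : n + (r : ℤ) - (r : ℤ) = n := by ring
      rw [h0, Finset.sum_attach _ (fun j => lam j * lcaSoln a r hr lam y (n + j))]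
    have hsplit : Finset.Icc (-(r : ℤ)) (r : ℤ)
        = insert (r : ℤ) (Finset.Icc (-(r : ℤ)) ((r : ℤ) - 1)) := by
      ext k; simp only [Finset.mem_Icc, Finset.mem_insert]; omega
    rw [hsplit, Finset.sum_insert (by simp only [Finset.mem_Icc, not_and, not_le]; omega)]
    rw [e1, ← mul_assoc, ZMod.mul_inv_of_unit _ h₂, one_mul]
    ring
  · -- use backward recursion at k = n - r
    have e1 : x (n - r) = (lam (-(r : ℤ)))⁻¹ * (y n -
        ∑ i ∈ Finset.Icc (-(r : ℤ) + 1) (r : ℤ), lam i * x (n + i)) := by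
      rw [hx, lcaSoln, dif_neg (by omega : ¬ ((r : ℤ) ≤ n - r)),
        dif_pos (by omega : n - (r : ℤ) < -(r : ℤ))]
      have h0 : n - (r : ℤ) + (r : ℤ) = n := by ring
      rw [h0, Finset.sum_attach _ (fun j => lam j * lcaSoln a r hr lam y (n + j))]
    have hsplit : Finset.Icc (-(r : ℤ)) (r : ℤ)
        = insert (-(r : ℤ)) (Finset.Icc (-(r : ℤ) + 1) (r : ℤ)) := by
      ext k; simp only [Finset.mem_Icc, Finset.mem_insert]; omega
    rw [hsplit, Finset.sum_insert (by simp only [Finset.mem_Icc, not_and, not_le]; omega)]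
    have : x (n + -(r : ℤ)) = x (n - r) := by norm_num [sub_eq_add_neg]
    rw [this, e1, ← mul_assoc, ZMod.mul_inv_of_unit _ h₁, one_mul]
    ring
end

section
/- Let μ be the uniform Bernoulli measure on (ℤ/aℤ)^ℤ, σ the shift, and T the one-sided linear CA (T x)_n = ∑_{i=0}^{r} λ_i x_{n+i} (mod a) with r ≥ 1 and λ_r a unit. For any two cylinder sets A, B depending on coordinates in [-M, M] and [-N, N] respectively, there exists n₀ such that for all n ≥ n₀ and all m ∈ ℕ, μ((T^m ∘ σ^n)^{-1} A ∩ B) = μ(A)·μ(B). -/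
open MeasureTheory

section AuxLCA

variable {a : ℕ}

/-- Extend a function on (the coercion of) a finset to all of `ℤ` by zero. -/
noncomputable def extz (s : Finset ℤ) (w : {i // i ∈ s} → ZMod a) : ℤ → ZMod a :=
  fun i => if h : i ∈ s then w ⟨i, h⟩ else 0

lemma extz_mem (s : Finset ℤ) (w : {i // i ∈ s} → ZMod a) (i : ℤ) (hi : i ∈ s) :
    extz s w i = w ⟨i, hi⟩ := dif_pos hi

lemma extz_coe (s : Finset ℤ) (w : {i // i ∈ s} → ZMod a) (i : {i // i ∈ s}) :
    extz s w (i : ℤ) = w i := by rw [extz_mem s w i i.2]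

lemma measure_of_local [NeZero a] [MeasurableSpace (ZMod a)] [MeasurableSingletonClass (ZMod a)]
    (μ : Measure (ℤ → ZMod a))
    (hμ : ∀ (s : Finset ℤ) (c : ℤ → ZMod a),
      μ {x | ∀ i ∈ s, x i = c i} = ((a : ENNReal))⁻¹ ^ s.card)
    (s : Finset ℤ) (P : (ℤ → ZMod a) → Prop) [DecidablePred P]
    (hloc : ∀ x y : ℤ → ZMod a, (∀ i ∈ s, x i = y i) → P x → P y) :
    μ {x | P x} =
      ((Finset.univ.filter (fun w : {i // i ∈ s} → ZMod a => P (extz s w))).card : ENNReal)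
        * ((a : ENNReal))⁻¹ ^ s.card := by
  classical
  have hset : {x | P x} =
      ⋃ w ∈ Finset.univ.filter (fun w : {i // i ∈ s} → ZMod a => P (extz s w)),
        {x : ℤ → ZMod a | ∀ i ∈ s, x i = extz s w i} := by
    ext x
    simp only [Set.mem_setOf_eq, Set.mem_iUnion, Finset.mem_filter, Finset.mem_univ, true_and]
    constructor
    · intro hx
      refine ⟨fun i => x i, ?_, ?_⟩
      · exact hloc x _ (fun i hi => by rw [extz_mem s _ i hi]) hx
      · intro i hi; rw [extz_mem s _ i hi]
    · rintro ⟨w, hw, hxw⟩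
      exact hloc (extz s w) x (fun i hi => (hxw i hi).symm) hw
  rw [hset, measure_biUnion_finset]
  · rw [Finset.sum_congr rfl (fun w _ => hμ s (extz s w)), Finset.sum_const, nsmul_eq_mul]
  · intro w hw w' hw' hne
    simp only [Function.onFun]
    rw [Set.disjoint_left]
    intro x hx hx'
    apply hne
    funext i
    have h1 := hx i.1 i.2
    have h2 := hx' i.1 i.2
    rw [extz_mem s w i.1 i.2] at h1
    rw [extz_mem s w' i.1 i.2] at h2
    rw [← h1, ← h2]
  · intro w _
    have : {x : ℤ → ZMod a | ∀ i ∈ s, x i = extz s w i} =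
        ⋂ i ∈ s, (fun x : ℤ → ZMod a => x i) ⁻¹' {extz s w i} := by
      ext x; simp
    rw [this]
    exact MeasurableSet.biInter s.countable_toSet
      (fun i _ => (measurable_pi_apply i) (measurableSet_singleton _))

lemma card_filter_forced [NeZero a] (s : Finset ℤ) (q : {i // i ∈ s} → Prop) [DecidablePred q]
    (g : {i // i ∈ s} → ZMod a) :
    (Finset.univ.filter
        (fun u : {i // i ∈ s} → ZMod a => ∀ i, q i → u i = g i)).card
      = a ^ (Finset.univ.filter (fun i : {i // i ∈ s} => ¬ q i)).card := by
  classical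
  rw [← Fintype.card_subtype, ← Fintype.card_subtype]
  have e : {u : {i // i ∈ s} → ZMod a // ∀ i, q i → u i = g i}
      ≃ ({i : {i // i ∈ s} // ¬ q i} → ZMod a) :=
    { toFun := fun u i => u.1 i.1
      invFun := fun v => ⟨fun i => if h : q i then g i else v ⟨i, h⟩, fun i hq => by simp [hq]⟩
      left_inv := fun u => by
        apply Subtype.ext; funext i
        by_cases h : q i
        · simp [h, u.2 i h]
        · simp [h]
      right_inv := fun v => by funext i; simp [i.2] }
  rw [Fintype.card_congr e, Fintype.card_fun, ZMod.card]

lemma sigma_iter (σ : (ℤ → ZMod a) → (ℤ → ZMod a)) (hσ : ∀ x i, σ x i = x (i + 1)) :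
    ∀ (n : ℕ) (x : ℤ → ZMod a) (i : ℤ), σ^[n] x i = x (i + n) := by
  intro n
  induction n with
  | zero => intro x i; simp
  | succ n ih =>
    intro x i
    rw [Function.iterate_succ_apply, ih, hσ]
    congr 1; push_cast; ring

variable (r : ℕ) (lam : ℕ → ZMod a) (T : (ℤ → ZMod a) → (ℤ → ZMod a))

lemma T_iter_local
    (hT : ∀ x n, T x n = ∑ i ∈ Finset.range (r + 1), lam i * x (n + (i : ℤ))) :
    ∀ (m : ℕ) (x y : ℤ → ZMod a) (j : ℤ),
      (∀ i : ℤ, j ≤ i → i ≤ j + ((m * r : ℕ) : ℤ) → x i = y i) → T^[m] x j = T^[m] y j := by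
  intro m
  induction m with
  | zero => intro x y j h; simpa using h j le_rfl (by simp)
  | succ m ih =>
    intro x y j h
    rw [Function.iterate_succ_apply, Function.iterate_succ_apply]
    apply ih
    intro i hi1 hi2
    rw [hT, hT]
    apply Finset.sum_congr rfl
    intro k hk
    have hk' : k ≤ r := Finset.mem_range_succ_iff.mp hk
    rw [h (i + k) (by omega) (by rw [Nat.succ_mul] at h ⊢; push_cast [Nat.cast_add] at hi2 ⊢; omega)]

lemma T_iter_diff
    (hT : ∀ x n, T x n = ∑ i ∈ Finset.range (r + 1), lam i * x (n + (i : ℤ))) :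
    ∀ (m : ℕ) (x y : ℤ → ZMod a) (j : ℤ),
      (∀ i : ℤ, j ≤ i → i < j + ((m * r : ℕ) : ℤ) → x i = y i) →
      T^[m] x j - T^[m] y j
        = lam r ^ m * (x (j + ((m * r : ℕ) : ℤ)) - y (j + ((m * r : ℕ) : ℤ))) := by
  intro m
  induction m with
  | zero => intro x y j h; simp
  | succ m ih =>
    intro x y j h
    rw [Function.iterate_succ_apply, Function.iterate_succ_apply]
    have key : T x (j + ((m*r : ℕ) : ℤ)) - T y (j + ((m*r : ℕ) : ℤ))
        = lam r * (x (j + (((m+1)*r : ℕ) : ℤ)) - y (j + (((m+1)*r : ℕ) : ℤ))) := by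
      rw [hT, hT, ← Finset.sum_sub_distrib, Finset.sum_range_succ]
      have h0 : ∀ k ∈ Finset.range r,
          lam k * x (j + ((m*r:ℕ):ℤ) + (k:ℤ)) - lam k * y (j + ((m*r:ℕ):ℤ) + (k:ℤ)) = 0 := by
        intro k hk
        have hk' : k < r := Finset.mem_range.mp hk
        rw [h (j + ((m*r:ℕ):ℤ) + (k:ℤ)) (by omega)
          (by rw [Nat.succ_mul]; push_cast [Nat.cast_add]; omega), sub_self]
      rw [Finset.sum_eq_zero h0, zero_add, ← mul_sub]
      congr 2 <;> · rw [Nat.succ_mul]; push_cast [Nat.cast_add]; ring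
    have hxy : ∀ i : ℤ, j ≤ i → i < j + ((m*r:ℕ):ℤ) → T x i = T y i := by
      intro i h1 h2
      rw [hT, hT]
      apply Finset.sum_congr rfl
      intro k hk
      have hk' : k ≤ r := Finset.mem_range_succ_iff.mp hk
      rw [h (i + k) (by omega) (by rw [Nat.succ_mul]; push_cast [Nat.cast_add]; omega)]
    rw [ih (T x) (T y) j hxy, key, ← mul_assoc, ← pow_succ]

end AuxLCA

/-- For the one-sided linear CA `(Tx)_n = ∑_{i=0}^{r} λ_i x_{n+i} (mod a)` (with `r ≥ 1`,
`λ_r` a unit), the shift `σ`, and the uniform Bernoulli measure `μ`: for any cylinders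
`A`, `B` on coordinates `[-M,M]`, `[-N,N]` there is `n₀` such that for all `n ≥ n₀` and
all `m`, `μ((T^m ∘ σ^n)⁻¹A ∩ B) = μ(A)·μ(B)`. -/
theorem lca_shift_asymptotic_independence (a r : ℕ) (ha : 2 ≤ a) (hr : 1 ≤ r)
    [MeasurableSpace (ZMod a)] [MeasurableSingletonClass (ZMod a)]
    (lam : ℕ → ZMod a) (hunit : IsUnit (lam r))
    (μ : Measure (ℤ → ZMod a)) [IsProbabilityMeasure μ]
    (hμ : ∀ (s : Finset ℤ) (c : ℤ → ZMod a),
      μ {x | ∀ i ∈ s, x i = c i} = ((a : ENNReal))⁻¹ ^ s.card)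
    (T σ : (ℤ → ZMod a) → (ℤ → ZMod a))
    (hT : ∀ x n, T x n = ∑ i ∈ Finset.range (r + 1), lam i * x (n + (i : ℤ)))
    (hσ : ∀ x i, σ x i = x (i + 1))
    (M N : ℕ) (c d : ℤ → ZMod a) (A B : Set (ℤ → ZMod a))
    (hA : A = {x | ∀ i ∈ Finset.Icc (-(M : ℤ)) (M : ℤ), x i = c i})
    (hB : B = {x | ∀ i ∈ Finset.Icc (-(N : ℤ)) (N : ℤ), x i = d i}) :
    ∃ n₀ : ℕ, ∀ n ≥ n₀, ∀ m : ℕ,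
      μ ((fun x => T^[m] (σ^[n] x)) ⁻¹' A ∩ B) = μ A * μ B := by
  classical
  haveI : NeZero a := ⟨by omega⟩
  refine ⟨M + N + 1, ?_⟩
  intro n hn m
  set R : ℕ := m * r with hR
  have haz : (a : ENNReal) ≠ 0 := by
    simp only [ne_eq, Nat.cast_eq_zero]; omega
  have hat : (a : ENNReal) ≠ ⊤ := ENNReal.natCast_ne_top a
  have hNM : (N : ℤ) + 1 ≤ (n : ℤ) - M := by omega
  set s : Finset ℤ :=
    Finset.Icc (-(N:ℤ)) (N:ℤ) ∪ Finset.Icc ((n:ℤ) - M) ((n:ℤ) + M + R) with hs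
  have hsmem : ∀ k : ℤ, k ∈ s ↔
      ((-(N:ℤ) ≤ k ∧ k ≤ N) ∨ ((n:ℤ) - M ≤ k ∧ k ≤ (n:ℤ) + M + R)) := by
    intro k
    rw [hs, Finset.mem_union, Finset.mem_Icc, Finset.mem_Icc]
  set F : (ℤ → ZMod a) → (ℤ → ZMod a) := fun x => T^[m] (σ^[n] x) with hF
  set P : (ℤ → ZMod a) → Prop := fun x =>
    (∀ j ∈ Finset.Icc (-(M:ℤ)) (M:ℤ), F x j = c j)
      ∧ (∀ i ∈ Finset.Icc (-(N:ℤ)) (N:ℤ), x i = d i) with hP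
  have hEB : (fun x => T^[m] (σ^[n] x)) ⁻¹' A ∩ B = {x | P x} := by
    rw [hA, hB]
    ext x
    simp only [Set.mem_inter_iff, Set.mem_preimage, Set.mem_setOf_eq, hP, hF]
  have hloc : ∀ x y : ℤ → ZMod a, (∀ i ∈ s, x i = y i) → P x → P y := by
    intro x y hxy hPx
    obtain ⟨h1, h2⟩ := hPx
    constructor
    · intro j hj
      rw [Finset.mem_Icc] at hj
      have hFeq : F x j = F y j := by
        simp only [hF]
        apply T_iter_local r lam T hT m (σ^[n] x) (σ^[n] y) j
        intro i hi1 hi2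
        rw [sigma_iter σ hσ, sigma_iter σ hσ]
        apply hxy
        apply (hsmem (i + n)).mpr
        right
        omega
      rw [← hFeq]
      exact h1 j (Finset.mem_Icc.mpr hj)
    · intro i hi
      rw [← hxy i ((hsmem i).mpr (Or.inl (Finset.mem_Icc.mp hi)))]
      exact h2 i hi
  have hmeas := measure_of_local μ hμ s P hloc
  set q : {i // i ∈ s} → Prop := fun i => ((i:ℤ) ≤ N ∨ (n:ℤ) - M + R ≤ (i:ℤ)) with hq
  set g : {i // i ∈ s} → ZMod a :=
    fun i => if (i:ℤ) ≤ N then d (i:ℤ) else c ((i:ℤ) - n - R) with hg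
  set Φ : ({i // i ∈ s} → ZMod a) → ({i // i ∈ s} → ZMod a) := fun w i =>
    if (n:ℤ) - M + R ≤ (i:ℤ) then F (extz s w) ((i:ℤ) - n - R) else w i with hΦ
  have hmem : ∀ i : {i // i ∈ s},
      (-(N:ℤ) ≤ (i:ℤ) ∧ (i:ℤ) ≤ N) ∨ ((n:ℤ) - M ≤ (i:ℤ) ∧ (i:ℤ) ≤ (n:ℤ) + M + R) :=
    fun i => (hsmem (i:ℤ)).mp i.2
  -- Φ is injective
  have hΦinj : Function.Injective Φ := by
    intro w w' hww
    have base : ∀ i : {i // i ∈ s}, ¬ ((n:ℤ) - M + R ≤ (i:ℤ)) → w i = w' i := by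
      intro i hi
      have h := congrFun hww i
      simp only [hΦ, if_neg hi] at h
      exact h
    have main : ∀ t : ℕ, ∀ i : {i // i ∈ s}, (i:ℤ) < (n:ℤ) - M + R + t → w i = w' i := by
      intro t
      induction t with
      | zero => intro i hi; exact base i (by push_cast at hi; omega)
      | succ t ih =>
        intro i hi
        by_cases hcase : (i:ℤ) < (n:ℤ) - M + R + t
        · exact ih i hcase
        · have hieq : (i:ℤ) = (n:ℤ) - M + R + t := by push_cast at hi ⊢; omega
          have hup : (i:ℤ) ≤ (n:ℤ) + M + R := by
            rcases hmem i with h | h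
            · omega
            · exact h.2
          have hcond : (n:ℤ) - M + R ≤ (i:ℤ) := by omega
          have e1 := congrFun hww i
          simp only [hΦ, if_pos hcond, hF] at e1
          have hagree : ∀ l : ℤ, ((i:ℤ) - n - R) ≤ l →
              l < ((i:ℤ) - n - R) + ((m * r : ℕ):ℤ) →
              σ^[n] (extz s w) l = σ^[n] (extz s w') l := by
            intro l hl1 hl2
            rw [sigma_iter σ hσ, sigma_iter σ hσ]
            by_cases hls : l + n ∈ s
            · rw [extz_mem s w _ hls, extz_mem s w' _ hls]
              apply ih ⟨l + n, hls⟩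
              have hco : ((⟨l + n, hls⟩ : {i // i ∈ s}) : ℤ) = l + n := rfl
              rw [hco]
              omega
            · simp only [extz, dif_neg hls]
          have hdiff := T_iter_diff r lam T hT m (σ^[n] (extz s w)) (σ^[n] (extz s w'))
            ((i:ℤ) - n - R) hagree
          rw [e1, sub_self] at hdiff
          rw [sigma_iter σ hσ, sigma_iter σ hσ] at hdiff
          have hidx : (i:ℤ) - n - R + ((m * r : ℕ):ℤ) + n = (i:ℤ) := by omega
          rw [hidx, extz_coe, extz_coe] at hdiff
          exact sub_eq_zero.mp ((hunit.pow m).mul_right_eq_zero.mp hdiff.symm)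
    funext i
    apply main (2*M + 1) i
    rcases hmem i with h | h <;> (push_cast; omega)
  -- P (extz s w) ↔ target condition on Φ w
  have hPiff : ∀ w : {i // i ∈ s} → ZMod a,
      P (extz s w) ↔ (∀ i, q i → Φ w i = g i) := by
    intro w
    constructor
    · rintro ⟨h1, h2⟩ i hiq
      rcases hiq with hile | hge
      · have hnot : ¬ ((n:ℤ) - M + R ≤ (i:ℤ)) := by omega
        simp only [hΦ, hg, if_neg hnot, if_pos hile]
        have hlow : -(N:ℤ) ≤ (i:ℤ) := by
          rcases hmem i with h | h
          · exact h.1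
          · omega
        have h3 := h2 (i:ℤ) (Finset.mem_Icc.mpr ⟨hlow, hile⟩)
        rw [extz_coe] at h3
        exact h3
      · have hup : (i:ℤ) ≤ (n:ℤ) + M + R := by
          rcases hmem i with h | h
          · omega
          · exact h.2
        have hnle : ¬ ((i:ℤ) ≤ N) := by omega
        simp only [hΦ, hg, if_pos hge, if_neg hnle]
        exact h1 ((i:ℤ) - n - R) (Finset.mem_Icc.mpr (by omega))
    · intro ht
      constructor
      · intro j hj
        rw [Finset.mem_Icc] at hj
        have hjs : j + n + R ∈ s := by
          apply (hsmem _).mpr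
          right
          omega
        have hcond : (n:ℤ) - M + R ≤ ((⟨j + n + R, hjs⟩ : {i // i ∈ s}) : ℤ) := by
          have hco : ((⟨j + n + R, hjs⟩ : {i // i ∈ s}) : ℤ) = j + n + R := rfl
          rw [hco]; omega
        have h4 := ht ⟨j + n + R, hjs⟩ (Or.inr hcond)
        have hnle : ¬ (((⟨j + n + R, hjs⟩ : {i // i ∈ s}) : ℤ) ≤ N) := by
          have hco : ((⟨j + n + R, hjs⟩ : {i // i ∈ s}) : ℤ) = j + n + R := rfl
          rw [hco]; omega
        simp only [hΦ, hg, if_pos hcond, if_neg hnle] at h4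
        have hj2 : ((⟨j + n + R, hjs⟩ : {i // i ∈ s}) : ℤ) - n - R = j := by
          have hco : ((⟨j + n + R, hjs⟩ : {i // i ∈ s}) : ℤ) = j + n + R := rfl
          rw [hco]; ring
        rw [hj2] at h4
        exact h4
      · intro i hi
        rw [Finset.mem_Icc] at hi
        have his : i ∈ s := (hsmem i).mpr (Or.inl hi)
        have hnot : ¬ ((n:ℤ) - M + R ≤ ((⟨i, his⟩ : {i // i ∈ s}) : ℤ)) := by
          have hco : ((⟨i, his⟩ : {i // i ∈ s}) : ℤ) = i := rfl
          rw [hco]; omega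
        have hile : ((⟨i, his⟩ : {i // i ∈ s}) : ℤ) ≤ N := hi.2
        have h5 := ht ⟨i, his⟩ (Or.inl hile)
        simp only [hΦ, hg, if_neg hnot, if_pos hile] at h5
        rw [extz_mem s w i his]
        exact h5
  -- card computations
  have hcard1 : (Finset.univ.filter (fun w : {i // i ∈ s} → ZMod a => P (extz s w))).card
      = (Finset.univ.filter
          (fun u : {i // i ∈ s} → ZMod a => ∀ i, q i → u i = g i)).card := by
    rw [Finset.filter_congr (fun w _ => hPiff w)]
    apply Finset.card_bij (fun w _ => Φ w)
    · intro w hw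
      simp only [Finset.mem_filter, Finset.mem_univ, true_and] at hw ⊢
      exact hw
    · intro w1 _ w2 _ h
      exact hΦinj h
    · intro u hu
      obtain ⟨w, hw⟩ := (Finite.injective_iff_bijective.mp hΦinj).2 u
      refine ⟨w, ?_, hw⟩
      simp only [Finset.mem_filter, Finset.mem_univ, true_and] at hu ⊢
      rw [hw]
      exact hu
  have hcard2 : (Finset.univ.filter (fun i : {i // i ∈ s} => ¬ q i)).card = R := by
    clear hcard1 hmeas hPiff hΦinj hEB hloc hμ hT hA hB
    have hio : ∀ i : {i // i ∈ s}, ¬ q i →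
        (i:ℤ) ∈ Finset.Icc ((n:ℤ) - M) ((n:ℤ) - M + R - 1) := by
      intro i hi
      simp only [hq] at hi
      push_neg at hi
      rw [Finset.mem_Icc]
      rcases hmem i with h | h <;> omega
    have hsur : ∀ k ∈ Finset.Icc ((n:ℤ) - M) ((n:ℤ) - M + R - 1),
        ∃ h : k ∈ s, ¬ q ⟨k, h⟩ := by
      intro k hk
      rw [Finset.mem_Icc] at hk
      have hks : k ∈ s := (hsmem k).mpr (Or.inr ⟨by omega, by omega⟩)
      refine ⟨hks, ?_⟩
      intro hqk
      simp only [hq] at hqk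
      rcases hqk with h | h
      · have h' : k ≤ (N:ℤ) := h
        omega
      · have h' : (n:ℤ) - M + R ≤ k := h
        omega
    have hc : (Finset.univ.filter (fun i : {i // i ∈ s} => ¬ q i)).card
        = (Finset.Icc ((n:ℤ) - M) ((n:ℤ) - M + R - 1)).card := by
      refine Finset.card_bij (fun i _ => (i : ℤ)) ?_ ?_ ?_
      · intro i hi
        simp only [Finset.mem_filter, Finset.mem_univ, true_and] at hi
        exact hio i hi
      · intro i1 _ i2 _ h
        exact Subtype.ext h
      · intro k hk
        obtain ⟨hks, hqk⟩ := hsur k hk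
        exact ⟨⟨k, hks⟩, by simpa using hqk, rfl⟩
    rw [hc, Int.card_Icc]
    omega
  have hdisj : Disjoint (Finset.Icc (-(N:ℤ)) (N:ℤ))
      (Finset.Icc ((n:ℤ) - M) ((n:ℤ) + M + R)) := by
    clear hmeas hcard1 hcard2 hPiff hΦinj
    rw [Finset.disjoint_left]
    intro k h1 h2
    rw [Finset.mem_Icc] at h1 h2
    omega
  have hscard : s.card = (2*M+1) + ((2*N+1) + R) := by
    clear hmeas hcard1 hcard2 hPiff hΦinj
    rw [hs, Finset.card_union_of_disjoint hdisj, Int.card_Icc, Int.card_Icc]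
    omega
  have hAval : μ A = (a:ENNReal)⁻¹ ^ (2*M+1) := by
    clear hmeas hcard1 hcard2 hPiff hΦinj
    rw [hA, hμ, Int.card_Icc]
    congr 1
    omega
  have hBval : μ B = (a:ENNReal)⁻¹ ^ (2*N+1) := by
    clear hmeas hcard1 hcard2 hPiff hΦinj
    rw [hB, hμ, Int.card_Icc]
    congr 1
    omega
  rw [hEB, hmeas, hcard1, card_filter_forced s q g, hcard2, hscard, hAval, hBval]
  rw [Nat.cast_pow]
  have hcancel : (a:ENNReal)^R * ((a:ENNReal))⁻¹ ^ R = 1 := by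
    rw [← mul_pow, ENNReal.mul_inv_cancel haz hat, one_pow]
  calc ((a:ENNReal))^R * ((a:ENNReal))⁻¹ ^ ((2*M+1) + ((2*N+1) + R))
      = ((a:ENNReal)^R * ((a:ENNReal))⁻¹ ^ R)
          * (((a:ENNReal))⁻¹^(2*M+1) * ((a:ENNReal))⁻¹^(2*N+1)) := by
        rw [pow_add, pow_add]; ring
    _ = ((a:ENNReal))⁻¹^(2*M+1) * ((a:ENNReal))⁻¹^(2*N+1) := by rw [hcancel, one_mul]
end

section
/- Let μ be the uniform Bernoulli measure on (ℤ/2ℤ)^ℕ, σ the shift, and T the CA (Tx)_i = x_i + x_{i+1} (mod 2). For every N ≥ 1, the transformation S = σ ∘ T^N is ergodic with respect to μ: every S-invariant measurable set has measure 0 or 1. -/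
set_option linter.unusedSectionVars false
set_option linter.unusedVariables false
set_option maxHeartbeats 1000000

open MeasureTheory
open scoped symmDiff

namespace ShiftCA

/-- Fiber cardinality of a surjective hom between finite additive groups. -/
lemma card_fiber {G H : Type*} [AddGroup G] [Fintype G] [AddGroup H] [Fintype H]
    [DecidableEq G] [DecidableEq H]
    (f : G →+ H) (hf : Function.Surjective f) (c : H) :
    (Finset.univ.filter (fun y : G => f y = c)).card * Fintype.card H = Fintype.card G := by
  classical
  obtain ⟨y₀, hy₀⟩ := hf c
  have e1 : (Finset.univ.filter (fun y : G => f y = c)).card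
      = Nat.card (f.ker) := by
    rw [← Fintype.card_coe]
    rw [Nat.card_eq_fintype_card]
    apply Fintype.card_congr
    refine ⟨fun y => ⟨y.1 - y₀, ?_⟩, fun z => ⟨z.1 + y₀, ?_⟩, ?_, ?_⟩
    · have := y.2; simp only [Finset.mem_filter] at this
      simp [AddMonoidHom.mem_ker, map_sub, this.2, hy₀]
    · have := z.2; rw [AddMonoidHom.mem_ker] at this
      simp [map_add, this, hy₀]
    · intro y; ext; simp
    · intro z; ext; simp
  rw [e1]
  have e2 : Nat.card H = Nat.card (G ⧸ f.ker) :=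
    (Nat.card_congr (QuotientAddGroup.quotientKerEquivOfSurjective f hf).toEquiv).symm
  have := AddSubgroup.card_eq_card_quotient_mul_card_addSubgroup f.ker
  rw [← Nat.card_eq_fintype_card, ← Nat.card_eq_fintype_card, e2, this]
  ring

/-- triangular solver -/
def solveAux (N : ℕ) (a : ℕ → ZMod 2) (s : Finset ℕ) (c : ℕ → ZMod 2) : ℕ → ZMod 2
  | j =>
    if h : N + 1 ≤ j ∧ (j - N - 1) ∈ s then
      c (j - N - 1) - ∑ k : Fin N, a k * solveAux N a s c (j - N + k)
    else 0
  decreasing_by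
    have := k.2; omega

lemma solveAux_spec (N : ℕ) (a : ℕ → ZMod 2) (s : Finset ℕ) (c : ℕ → ZMod 2)
    (i : ℕ) (hi : i ∈ s) :
    solveAux N a s c (i + N + 1)
      = c i - ∑ k : Fin N, a k * solveAux N a s c (i + 1 + k) := by
  rw [solveAux]
  have h1 : N + 1 ≤ i + N + 1 ∧ (i + N + 1 - N - 1) ∈ s := by
    constructor; · omega
    · have : i + N + 1 - N - 1 = i := by omega
      rw [this]; exact hi
  rw [dif_pos h1]
  have : i + N + 1 - N - 1 = i := by omega
  rw [this]
  congr 1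
  apply Finset.sum_congr rfl
  intro k _
  have : i + N + 1 - N + (k : ℕ) = i + 1 + k := by omega
  rw [this]

variable [MeasurableSpace (ZMod 2)] [MeasurableSingletonClass (ZMod 2)]

/-- atomic cylinder -/
def cyl (s : Finset ℕ) (c : ℕ → ZMod 2) : Set (ℕ → ZMod 2) := {x | ∀ i ∈ s, x i = c i}

lemma measurableSet_cyl (s : Finset ℕ) (c : ℕ → ZMod 2) : MeasurableSet (cyl s c) := by
  have h : cyl s c = ⋂ i ∈ s, (fun x : ℕ → ZMod 2 => x i) ⁻¹' {c i} := by
    ext x; simp [cyl]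
  rw [h]
  exact MeasurableSet.biInter s.countable_toSet
    (fun i _ => (measurable_pi_apply i) (measurableSet_singleton _))

lemma pattern_measure (μ : Measure (ℕ → ZMod 2))
    (hμ : ∀ (s : Finset ℕ) (c : ℕ → ZMod 2), μ (cyl s c) = (2 : ENNReal)⁻¹ ^ s.card)
    (s : Finset ℕ) (Q : Finset (ℕ → ZMod 2)) (hQ : ∀ q ∈ Q, ∀ i ∉ s, q i = 0) :
    μ (⋃ q ∈ Q, cyl s q) = Q.card * (2 : ENNReal)⁻¹ ^ s.card := by
  rw [measure_biUnion_finset ?_ (fun q _ => measurableSet_cyl s q)]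
  · rw [Finset.sum_congr rfl (fun q _ => hμ s q), Finset.sum_const, nsmul_eq_mul]
  · intro q hq r hr hqr
    simp only [Function.onFun]
    rw [Set.disjoint_left]
    intro x hxq hxr
    apply hqr
    funext i
    by_cases hi : i ∈ s
    · rw [← hxq i hi, ← hxr i hi]
    · rw [hQ q hq i hi, hQ r hr i hi]

lemma cyl_disjoint {s : Finset ℕ} {c c' : ℕ → ZMod 2} (h : ∃ i ∈ s, c i ≠ c' i) :
    Disjoint (cyl s c) (cyl s c') := by
  obtain ⟨i, hi, hne⟩ := h
  rw [Set.disjoint_left]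
  intro x hx hx'
  exact hne ((hx i hi).symm.trans (hx' i hi))

variable {T σ S : (ℕ → ZMod 2) → (ℕ → ZMod 2)} {N : ℕ}

lemma T_iterate (hT : ∀ x i, T x i = x i + x (i + 1)) (n : ℕ) (x : ℕ → ZMod 2) (i : ℕ) :
    T^[n] x i = ∑ k ∈ Finset.range (n + 1), (n.choose k : ZMod 2) * x (i + k) := by
  induction n generalizing x i with
  | zero => simp
  | succ n ih =>
    rw [Function.iterate_succ_apply, ih]
    have h1 : ∀ j, T x j = x j + x (j + 1) := hT x
    have key : ∀ m : ℕ, ∑ k ∈ Finset.range (n + 2), ((n+1).choose k : ZMod 2) * x (m + k)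
        = ∑ k ∈ Finset.range (n + 1), (n.choose k : ZMod 2) * (x (m + k) + x (m + k + 1)) := by
      intro m
      rw [Finset.sum_range_succ' (fun k => ((n+1).choose k : ZMod 2) * x (m + k))]
      simp only [Nat.choose_succ_succ, Nat.cast_add, add_mul, Nat.choose_zero_right]
      rw [Finset.sum_add_distrib]
      have e2 : ∑ k ∈ Finset.range (n + 1), (n.choose (k+1) : ZMod 2) * x (m + (k + 1))
          = ∑ k ∈ Finset.range (n + 1), (n.choose k : ZMod 2) * x (m + k)
            - (n.choose 0 : ZMod 2) * x (m + 0) := by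
        rw [Finset.sum_range_succ (fun k => (n.choose (k+1) : ZMod 2) * x (m + (k + 1))) n,
          Finset.sum_range_succ' (fun k => (n.choose k : ZMod 2) * x (m + k)) n]
        simp only [Nat.choose_succ_self, Nat.cast_zero, zero_mul, add_zero]
        ring
      rw [e2]
      simp only [Nat.choose_zero_right, Nat.cast_one, one_mul, Nat.add_zero]
      rw [Finset.sum_congr rfl (fun k _ => mul_add ((n.choose k : ZMod 2)) (x (m+k)) (x (m+k+1))),
        Finset.sum_add_distrib]
      have : ∀ k, m + k + 1 = m + (k+1) := fun k => by omega
      simp only [this]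
      ring
    rw [key i]
    exact Finset.sum_congr rfl (fun k _ => by rw [h1 (i + k)])

lemma S_apply {S : (ℕ → ZMod 2) → (ℕ → ZMod 2)} {N : ℕ}
    (hT : ∀ x i, T x i = x i + x (i + 1)) (hσ : ∀ x i, σ x i = x (i + 1))
    (hS : S = fun x => σ (T^[N] x)) (x : ℕ → ZMod 2) (i : ℕ) :
    S x i = ∑ k ∈ Finset.range (N + 1), (N.choose k : ZMod 2) * x (i + 1 + k) := by
  rw [hS]
  simp only [hσ, T_iterate hT]

lemma measurable_T (hT : ∀ x i, T x i = x i + x (i + 1)) : Measurable T := by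
  rw [measurable_pi_iff]
  intro i
  have : (fun x => T x i) = (fun p : ZMod 2 × ZMod 2 => p.1 + p.2) ∘
      (fun x : ℕ → ZMod 2 => (x i, x (i+1))) := by funext x; simp [hT]
  rw [this]
  exact (measurable_of_countable _).comp ((measurable_pi_apply i).prodMk (measurable_pi_apply (i+1)))

lemma measurable_S {S : (ℕ → ZMod 2) → (ℕ → ZMod 2)} {N : ℕ}
    (hT : ∀ x i, T x i = x i + x (i + 1)) (hσ : ∀ x i, σ x i = x (i + 1))
    (hS : S = fun x => σ (T^[N] x)) : Measurable S := by
  have hσm : Measurable σ := by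
    rw [measurable_pi_iff]; intro i
    simp only [hσ]; exact measurable_pi_apply (i+1)
  rw [hS]
  exact hσm.comp ((measurable_T hT).iterate N)

section Lmap
variable (N : ℕ) (s : Finset ℕ)

/-- the window length -/
def M : ℕ := s.sup id + N + 2

lemma lt_M (i : ℕ) (hi : i ∈ s) (k : ℕ) (hk : k ≤ N) : i + 1 + k < M N s := by
  have : i ≤ s.sup id := Finset.le_sup (f := id) hi
  unfold M; omega

/-- the linear (additive) map given by S on a window -/
def Lmap : (Fin (M N s) → ZMod 2) →+ ((↥s) → ZMod 2) where
  toFun y := fun i => ∑ k : Fin (N+1),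
    (N.choose k : ZMod 2) * y ⟨i.1 + 1 + k.1, lt_M N s i.1 i.2 k.1 (by omega)⟩
  map_zero' := by funext i; simp
  map_add' y z := by
    funext i
    simp only [Pi.add_apply, mul_add]
    rw [Finset.sum_add_distrib]

lemma Lmap_surjective : Function.Surjective (Lmap N s) := by
  intro d
  classical
  set a : ℕ → ZMod 2 := fun k => (N.choose k : ZMod 2) with ha
  set c' : ℕ → ZMod 2 := fun j => if h : j ∈ s then d ⟨j, h⟩ else 0 with hc'
  set g := solveAux N a s c' with hg
  refine ⟨fun j => g j, ?_⟩
  funext i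
  show ∑ k : Fin (N+1), (N.choose k : ZMod 2) * g (i.1 + 1 + k.1) = d i
  rw [Fin.sum_univ_castSucc]
  have hlast : (N.choose (Fin.last N) : ZMod 2) * g (i.1 + 1 + (Fin.last N : Fin (N+1)).1)
      = g (i.1 + N + 1) := by
    simp only [Fin.val_last, Nat.choose_self, Nat.cast_one, one_mul]
    congr 1; omega
  have hspec := solveAux_spec N a s c' i.1 i.2
  rw [← hg] at hspec
  rw [hlast, hspec]
  have : ∑ k : Fin N, (N.choose (Fin.castSucc k) : ZMod 2)
        * g (i.1 + 1 + ((Fin.castSucc k) : Fin (N+1)).1)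
      = ∑ k : Fin N, a k * g (i.1 + 1 + k) := by
    apply Finset.sum_congr rfl; intro k _
    simp [ha, Fin.coe_castSucc]
  rw [this]
  have : c' i.1 = d i := by simp [hc', i.2]
  rw [← this]; ring

end Lmap

lemma Lmap_apply (N : ℕ) (s : Finset ℕ) (y : Fin (M N s) → ZMod 2) (i : ↥s) :
    Lmap N s y i = ∑ k : Fin (N+1),
      (N.choose k : ZMod 2) * y ⟨i.1 + 1 + k.1, lt_M N s i.1 i.2 k.1 (by omega)⟩ := rfl

theorem measure_preimage_cyl (μ : Measure (ℕ → ZMod 2))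
    (hμ : ∀ (s : Finset ℕ) (c : ℕ → ZMod 2), μ (cyl s c) = (2 : ENNReal)⁻¹ ^ s.card)
    {T σ S : (ℕ → ZMod 2) → (ℕ → ZMod 2)} {N : ℕ}
    (hT : ∀ x i, T x i = x i + x (i + 1)) (hσ : ∀ x i, σ x i = x (i + 1))
    (hS : S = fun x => σ (T^[N] x)) (s : Finset ℕ) (c : ℕ → ZMod 2) :
    μ (S ⁻¹' cyl s c) = (2 : ENNReal)⁻¹ ^ s.card := by
  classical
  set d : (↥s) → ZMod 2 := fun i => c i.1 with hd
  set F := Finset.univ.filter (fun y : Fin (M N s) → ZMod 2 => Lmap N s y = d) with hF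
  set emb : (Fin (M N s) → ZMod 2) → (ℕ → ZMod 2) :=
    fun y j => if h : j < M N s then y ⟨j, h⟩ else 0 with hemb
  set Q := F.image emb with hQ
  -- bridging formula
  have hbridge : ∀ (y : Fin (M N s) → ZMod 2) (x : ℕ → ZMod 2)
      (hxy : ∀ j : Fin (M N s), y j = x j.1) (i : ↥s),
      Lmap N s y i = ∑ k ∈ Finset.range (N+1), (N.choose k : ZMod 2) * x (i.1 + 1 + k) := by
    intro y x hxy i
    rw [Lmap_apply]
    rw [← Fin.sum_univ_eq_sum_range (fun k => (N.choose k : ZMod 2) * x (i.1 + 1 + k)) (N+1)]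
    exact Finset.sum_congr rfl (fun k _ => by rw [hxy])
  -- the set identity
  have hset : S ⁻¹' cyl s c = ⋃ q ∈ Q, cyl (Finset.range (M N s)) q := by
    ext x
    simp only [Set.mem_preimage, cyl, Set.mem_setOf_eq, Set.mem_iUnion, exists_prop]
    constructor
    · intro hx
      set y : Fin (M N s) → ZMod 2 := fun j => x j.1 with hy
      have hyF : y ∈ F := by
        rw [hF, Finset.mem_filter]
        refine ⟨Finset.mem_univ _, ?_⟩
        funext i
        rw [hbridge y x (fun j => rfl) i, ← S_apply hT hσ hS x i.1, hx i.1 i.2, hd]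
      refine ⟨emb y, Finset.mem_image_of_mem emb hyF, ?_⟩
      intro j hj
      rw [Finset.mem_range] at hj
      rw [hemb]; simp only [hj, dif_pos]; rfl
    · rintro ⟨q, hqQ, hxq⟩
      rw [hQ, Finset.mem_image] at hqQ
      obtain ⟨y, hyF, rfl⟩ := hqQ
      rw [hF, Finset.mem_filter] at hyF
      intro i hi
      rw [S_apply hT hσ hS x i]
      have : ∑ k ∈ Finset.range (N+1), (N.choose k : ZMod 2) * x (i + 1 + k)
          = Lmap N s y ⟨i, hi⟩ := by
        rw [hbridge y x ?_ ⟨i, hi⟩]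
        intro j
        have hj : j.1 ∈ Finset.range (M N s) := Finset.mem_range.2 j.2
        rw [hxq j.1 hj, hemb]
        simp only [j.2, dif_pos]
      rw [this, hyF.2, hd]
  rw [hset, pattern_measure μ hμ _ Q ?_]
  · -- cardinality computation
    have hinj : Function.Injective emb := by
      intro y z h
      funext j
      have := congrFun h j.1
      rw [hemb] at this
      simpa [j.2] using this
    have hQcard : Q.card = F.card := Finset.card_image_of_injective F hinj
    have hnat : F.card * 2 ^ s.card = 2 ^ (M N s) := by
      have := card_fiber (Lmap N s) (Lmap_surjective N s) d
      rwa [Fintype.card_fun, Fintype.card_fun, Fintype.card_coe, ZMod.card,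
        Fintype.card_fin] at this
    have hcast : (F.card : ENNReal) * 2 ^ s.card = 2 ^ (M N s) := by
      exact_mod_cast congrArg (Nat.cast (R := ENNReal)) hnat
    rw [hQcard, Finset.card_range]
    have h2 : ((2 : ENNReal) ^ s.card) ≠ 0 := by positivity
    have h2' : ((2 : ENNReal) ^ s.card) ≠ ⊤ := by
      exact ENNReal.pow_ne_top (by norm_num)
    have hM2 : ((2 : ENNReal) ^ (M N s)) ≠ 0 := by positivity
    have hM2' : ((2 : ENNReal) ^ (M N s)) ≠ ⊤ := ENNReal.pow_ne_top (by norm_num)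
    have hFval : (F.card : ENNReal) = 2 ^ (M N s) * ((2 : ENNReal) ^ s.card)⁻¹ := by
      rw [← hcast, mul_assoc, ENNReal.mul_inv_cancel h2 h2', mul_one]
    rw [hFval, ← ENNReal.inv_pow, ← ENNReal.inv_pow]
    rw [mul_comm ((2 : ENNReal) ^ (M N s)), mul_assoc, ENNReal.mul_inv_cancel hM2 hM2', mul_one]
  · rintro q hq j hj
    rw [hQ, Finset.mem_image] at hq
    obtain ⟨y, hy, rfl⟩ := hq
    rw [Finset.mem_range] at hj
    rw [hemb]
    simp only [hj, dif_neg, not_false_iff]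

theorem measurePreserving_S (μ : Measure (ℕ → ZMod 2)) [IsProbabilityMeasure μ]
    (hμ : ∀ (s : Finset ℕ) (c : ℕ → ZMod 2), μ (cyl s c) = (2 : ENNReal)⁻¹ ^ s.card)
    {T σ S : (ℕ → ZMod 2) → (ℕ → ZMod 2)} {N : ℕ}
    (hT : ∀ x i, T x i = x i + x (i + 1)) (hσ : ∀ x i, σ x i = x (i + 1))
    (hS : S = fun x => σ (T^[N] x)) : MeasurePreserving S μ μ := by
  classical
  have hSm : Measurable S := measurable_S hT hσ hS
  refine ⟨hSm, ?_⟩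
  have : IsProbabilityMeasure (Measure.map S μ) := Measure.isProbabilityMeasure_map hSm.aemeasurable
  refine ext_of_generate_finite (measurableCylinders (fun _ : ℕ => ZMod 2))
    generateFrom_measurableCylinders.symm isPiSystem_measurableCylinders ?_ ?_
  · intro t ht
    obtain ⟨s, Sset, hSset, rfl⟩ := (mem_measurableCylinders t).1 ht
    set extq : ((↥s) → ZMod 2) → (ℕ → ZMod 2) :=
      fun q j => if h : j ∈ s then q ⟨j, h⟩ else 0 with hextq
    have hdec : cylinder s Sset = ⋃ q ∈ Sset.toFinset, cyl s (extq q) := by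
      ext x
      simp only [mem_cylinder, Set.mem_iUnion, exists_prop, Set.mem_toFinset, cyl,
        Set.mem_setOf_eq]
      constructor
      · intro hx
        refine ⟨s.restrict x, hx, ?_⟩
        intro i hi
        simp [hextq, hi, Finset.restrict]
      · rintro ⟨q, hq, hxq⟩
        have : s.restrict x = q := by
          funext i
          have := hxq i.1 i.2
          simpa [hextq, i.2, Finset.restrict] using this
        rwa [this]
    have hdisj : (Sset.toFinset : Set ((↥s) → ZMod 2)).PairwiseDisjoint
        (fun q => cyl s (extq q)) := by
      intro q hq r hr hqr
      apply cyl_disjoint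
      have : ∃ i, q i ≠ r i := by
        by_contra hcon
        push_neg at hcon
        exact hqr (funext hcon)
      obtain ⟨i, hi⟩ := this
      exact ⟨i.1, i.2, by simpa [hextq, i.2] using hi⟩
    rw [Measure.map_apply hSm (hSset.cylinder), hdec, Set.preimage_iUnion₂]
    have hdisjpre : (Sset.toFinset : Set ((↥s) → ZMod 2)).PairwiseDisjoint
        (fun q => S ⁻¹' cyl s (extq q)) := by
      intro q hq r hr hqr
      exact (hdisj hq hr hqr).preimage S
    rw [measure_biUnion_finset hdisjpre (fun q _ => hSm (measurableSet_cyl _ _))]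
    rw [measure_biUnion_finset hdisj (fun q _ => measurableSet_cyl _ _)]
    refine Finset.sum_congr rfl (fun q _ => ?_)
    rw [measure_preimage_cyl μ hμ hT hσ hS, hμ]
  · rw [Measure.map_apply hSm MeasurableSet.univ, Set.preimage_univ]

lemma measure_inter_preimages (μ : Measure (ℕ → ZMod 2))
    (hμ : ∀ (s : Finset ℕ) (c : ℕ → ZMod 2), μ (cyl s c) = (2 : ENNReal)⁻¹ ^ s.card)
    (I : Finset ℕ) (u : ℕ → Set (ZMod 2)) :
    μ (⋂ i ∈ I, (fun x : ℕ → ZMod 2 => x i) ⁻¹' u i)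
      = ∏ i ∈ I, (((u i).toFinite.toFinset.card : ENNReal) * (2 : ENNReal)⁻¹) := by
  classical
  set emb : (∀ a ∈ I, ZMod 2) → (ℕ → ZMod 2) :=
    fun p j => if h : j ∈ I then p j h else 0 with hemb
  set Q := (I.pi (fun i => (u i).toFinite.toFinset)).image emb with hQ
  have hset : (⋂ i ∈ I, (fun x : ℕ → ZMod 2 => x i) ⁻¹' u i) = ⋃ q ∈ Q, cyl I q := by
    ext x
    simp only [Set.mem_iInter, Set.mem_preimage, Set.mem_iUnion, exists_prop, cyl,
      Set.mem_setOf_eq]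
    constructor
    · intro hx
      refine ⟨emb (fun i _ => x i), ?_, ?_⟩
      · rw [hQ, Finset.mem_image]
        refine ⟨fun i _ => x i, ?_, rfl⟩
        rw [Finset.mem_pi]
        intro i hi
        rw [Set.Finite.mem_toFinset]
        exact hx i hi
      · intro i hi
        simp [hemb, hi]
    · rintro ⟨q, hq, hxq⟩
      rw [hQ, Finset.mem_image] at hq
      obtain ⟨p, hp, rfl⟩ := hq
      rw [Finset.mem_pi] at hp
      intro i hi
      have h1 : x i = p i hi := by simpa [hemb, hi] using hxq i hi
      rw [h1, ← Set.Finite.mem_toFinset (Set.toFinite _)]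
      exact hp i hi
  rw [hset, pattern_measure μ hμ I Q ?_]
  · have hinj : Set.InjOn emb (I.pi (fun i => (u i).toFinite.toFinset)) := by
      intro p hp p' hp' h
      funext a h'
      have := congrFun h a
      simpa [hemb, h'] using this
    rw [hQ, Finset.card_image_of_injOn hinj, Finset.card_pi, Nat.cast_prod,
      Finset.prod_mul_distrib, Finset.prod_const]
  · rintro q hq j hj
    rw [hQ, Finset.mem_image] at hq
    obtain ⟨p, hp, rfl⟩ := hq
    simp [hemb, hj]

theorem iIndep_coords (μ : Measure (ℕ → ZMod 2)) [IsProbabilityMeasure μ]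
    (hμ : ∀ (s : Finset ℕ) (c : ℕ → ZMod 2), μ (cyl s c) = (2 : ENNReal)⁻¹ ^ s.card) :
    ProbabilityTheory.iIndep
      (fun n : ℕ => MeasurableSpace.comap (fun x : ℕ → ZMod 2 => x n) inferInstance) μ := by
  classical
  rw [ProbabilityTheory.iIndep_iff]
  intro I f hf
  have h' : ∀ i ∈ I, ∃ v : Set (ZMod 2), MeasurableSet v ∧ (fun x : ℕ → ZMod 2 => x i) ⁻¹' v = f i := by
    intro i hi
    exact hf i hi
  choose! u hu1 hu2 using h'
  have e1 : (⋂ i ∈ I, f i) = ⋂ i ∈ I, (fun x : ℕ → ZMod 2 => x i) ⁻¹' u i := by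
    apply Set.iInter₂_congr
    intro i hi
    rw [hu2 i hi]
  rw [e1, measure_inter_preimages μ hμ I u]
  apply Finset.prod_congr rfl
  intro i hi
  have := measure_inter_preimages μ hμ {i} u
  simp only [Finset.prod_singleton, Set.biInter_singleton] at this
  rw [← hu2 i hi, ← this]
  congr 1
  simp

lemma T_iter_agree (hT : ∀ x i, T x i = x i + x (i + 1)) (k : ℕ) (x y : ℕ → ZMod 2) (m : ℕ)
    (h : ∀ j, m ≤ j → x j = y j) : ∀ j, m ≤ j → T^[k] x j = T^[k] y j := by
  induction k generalizing x y with
  | zero => simpa using h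
  | succ k ih =>
    rw [Function.iterate_succ_apply, Function.iterate_succ_apply]
    refine ih (T x) (T y) ?_
    intro j hj
    rw [hT, hT, h j hj, h (j+1) (by omega)]

lemma S_iter_agree (hT : ∀ x i, T x i = x i + x (i + 1)) (hσ : ∀ x i, σ x i = x (i + 1))
    (hS : S = fun x => σ (T^[N] x)) :
    ∀ (n : ℕ) (x y : ℕ → ZMod 2), (∀ j, n ≤ j → x j = y j) → S^[n] x = S^[n] y := by
  intro n
  induction n with
  | zero => intro x y h; funext j; exact h j (Nat.zero_le j)
  | succ n ih =>
    intro x y h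
    rw [Function.iterate_succ_apply, Function.iterate_succ_apply]
    refine ih (S x) (S y) ?_
    intro j hj
    rw [hS]
    simp only [hσ]
    exact T_iter_agree hT N x y (n+1) h (j+1) (by omega)

theorem main
    (μ : Measure (ℕ → ZMod 2)) [IsProbabilityMeasure μ]
    (hμ : ∀ (s : Finset ℕ) (c : ℕ → ZMod 2),
      μ {x | ∀ i ∈ s, x i = c i} = ((2 : ENNReal))⁻¹ ^ s.card)
    (T σ : (ℕ → ZMod 2) → (ℕ → ZMod 2))
    (hT : ∀ x i, T x i = x i + x (i + 1))
    (hσ : ∀ x i, σ x i = x (i + 1))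
    (N : ℕ) (hN : 1 ≤ N)
    (S : (ℕ → ZMod 2) → (ℕ → ZMod 2)) (hS : S = fun x => σ (T^[N] x)) :
    ∀ A : Set (ℕ → ZMod 2), MeasurableSet A → μ ((S ⁻¹' A) ∆ A) = 0 →
      μ A = 0 ∨ μ A = 1 := by
  intro A hA hinv
  have hμ' : ∀ (s : Finset ℕ) (c : ℕ → ZMod 2), μ (cyl s c) = (2 : ENNReal)⁻¹ ^ s.card := hμ
  have hSm : Measurable S := measurable_S hT hσ hS
  have hpres : MeasurePreserving S μ μ := measurePreserving_S μ hμ' hT hσ hS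
  -- iterated invariance
  have hiter : ∀ k : ℕ, μ ((S^[k] ⁻¹' A) ∆ A) = 0 := by
    intro k
    induction k with
    | zero => simp
    | succ k ih =>
      have e1 : S^[k+1] ⁻¹' A = S^[k] ⁻¹' (S ⁻¹' A) := by
        rw [Function.iterate_succ']
        rfl
      have h1 : μ ((S^[k] ⁻¹' (S ⁻¹' A)) ∆ (S^[k] ⁻¹' A)) = 0 := by
        rw [← Set.preimage_symmDiff]
        rw [(hpres.iterate k).measure_preimage
          (((hSm hA).symmDiff hA).nullMeasurableSet)]
        exact hinv
      rw [e1]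
      refine le_antisymm ?_ (zero_le)
      calc μ ((S^[k] ⁻¹' (S ⁻¹' A)) ∆ A)
          ≤ μ (((S^[k] ⁻¹' (S ⁻¹' A)) ∆ (S^[k] ⁻¹' A)) ∪ ((S^[k] ⁻¹' A) ∆ A)) :=
            measure_mono (symmDiff_triangle _ _ _)
        _ ≤ μ ((S^[k] ⁻¹' (S ⁻¹' A)) ∆ (S^[k] ⁻¹' A)) + μ ((S^[k] ⁻¹' A) ∆ A) :=
            measure_union_le _ _
        _ = 0 := by rw [h1, ih, add_zero]
  -- the tail set
  set A2 : Set (ℕ → ZMod 2) := ⋂ n : ℕ, ⋃ k : ℕ, ⋃ (_ : n ≤ k), S^[k] ⁻¹' A with hA2def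
  -- μ (A2 ∆ A) = 0
  have hA2null : μ (A2 ∆ A) = 0 := by
    have h1 : A2 \ A ⊆ ⋃ k : ℕ, ((S^[k] ⁻¹' A) ∆ A) := by
      intro x hx
      have hx1 : x ∈ ⋃ k : ℕ, ⋃ (_ : 0 ≤ k), S^[k] ⁻¹' A := by
        have := hx.1; rw [hA2def] at this
        exact Set.mem_iInter.1 this 0
      simp only [Set.mem_iUnion] at hx1 ⊢
      obtain ⟨k, _, hk⟩ := hx1
      exact ⟨k, Or.inl ⟨hk, hx.2⟩⟩
    have h2 : A \ A2 ⊆ ⋃ k : ℕ, ((S^[k] ⁻¹' A) ∆ A) := by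
      intro x hx
      have hx2 : x ∉ A2 := hx.2
      rw [hA2def, Set.mem_iInter] at hx2
      push_neg at hx2
      obtain ⟨n, hn⟩ := hx2
      simp only [Set.mem_iUnion] at hn
      push_neg at hn
      simp only [Set.mem_iUnion]
      exact ⟨n, Or.inr ⟨hx.1, hn n le_rfl⟩⟩
    have h3 : μ (⋃ k : ℕ, ((S^[k] ⁻¹' A) ∆ A)) = 0 := by
      refine measure_iUnion_null (fun k => hiter k)
    refine le_antisymm ?_ (zero_le)
    calc μ (A2 ∆ A) ≤ μ (⋃ k : ℕ, ((S^[k] ⁻¹' A) ∆ A)) := by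
          refine measure_mono ?_
          rw [Set.symmDiff_def]
          exact Set.union_subset h1 h2
      _ = 0 := h3
  -- tail measurability
  set 𝔰 : ℕ → MeasurableSpace (ℕ → ZMod 2) :=
    fun n => MeasurableSpace.comap (fun x : ℕ → ZMod 2 => x n) inferInstance with h𝔰
  have h_le : ∀ n, 𝔰 n ≤ (inferInstance : MeasurableSpace (ℕ → ZMod 2)) :=
    fun n => (measurable_pi_apply n).comap_le
  set 𝔉 : ℕ → MeasurableSpace (ℕ → ZMod 2) := fun n => ⨆ m, ⨆ (_ : n ≤ m), 𝔰 m with h𝔉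
  have h𝔉mono : ∀ {n k : ℕ}, n ≤ k → 𝔉 k ≤ 𝔉 n := by
    intro n k hnk
    exact iSup₂_le fun m hm => le_iSup₂ (f := fun m (_ : n ≤ m) => 𝔰 m) m (le_trans hnk hm)
  have hSnmeas : ∀ n : ℕ, Measurable[𝔉 n] (S^[n]) := by
    intro n
    set patch : (ℕ → ZMod 2) → (ℕ → ZMod 2) :=
      fun x j => if j < n then 0 else x j with hpatchdef
    have hpatch : Measurable[𝔉 n] patch := by
      rw [@measurable_pi_iff _ _ _ (𝔉 n) _]
      intro j
      by_cases hj : j < n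
      · have : (fun x : ℕ → ZMod 2 => patch x j) = fun _ => 0 := by
          funext x; simp [hpatchdef, hj]
        rw [this]; exact measurable_const
      · have : (fun x : ℕ → ZMod 2 => patch x j) = fun x : ℕ → ZMod 2 => x j := by
          funext x; simp [hpatchdef, hj]
        rw [this]
        have h1 : Measurable[𝔰 j] (fun x : ℕ → ZMod 2 => x j) :=
          comap_measurable _
        exact h1.mono (le_iSup₂ (f := fun m (_ : n ≤ m) => 𝔰 m) j (by omega)) le_rfl
    have heq : S^[n] = (S^[n]) ∘ patch := by
      funext x
      exact (S_iter_agree hT hσ hS n (patch x) x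
        (fun j hj => by simp [hpatchdef, Nat.not_lt.2 hj])).symm ▸ rfl
    rw [heq]
    exact (hpres.measurable.iterate n).comp hpatch
  have ht_tail : MeasurableSet[Filter.limsup 𝔰 Filter.atTop] A2 := by
    rw [Filter.limsup_eq_iInf_iSup_of_nat, MeasurableSpace.measurableSet_iInf]
    intro n
    have hrew : A2 = ⋂ m : ℕ, ⋃ k : ℕ, ⋃ (_ : m + n ≤ k), S^[k] ⁻¹' A := by
      rw [hA2def]
      apply Set.Subset.antisymm
      · intro x hx
        rw [Set.mem_iInter] at hx ⊢
        intro m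
        exact hx (m + n)
      · intro x hx
        rw [Set.mem_iInter] at hx ⊢
        intro m
        have := hx m
        simp only [Set.mem_iUnion] at this ⊢
        obtain ⟨k, hk, hmem⟩ := this
        exact ⟨k, by omega, hmem⟩
    rw [hrew]
    refine MeasurableSet.iInter (fun m => MeasurableSet.iUnion (fun k =>
      MeasurableSet.iUnion (fun hk => ?_)))
    exact h𝔉mono (show n ≤ k by omega) _ ((hSnmeas k) hA)
  have h01 := ProbabilityTheory.measure_zero_or_one_of_measurableSet_limsup_atTop h_le
    (iIndep_coords μ hμ') ht_tail
  have hAA2 : μ A = μ A2 :=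
    (measure_congr ((measure_symmDiff_eq_zero_iff).1 hA2null)).symm
  rw [hAA2]
  exact h01

end ShiftCA

/-- For the uniform Bernoulli measure on `(ℤ/2ℤ)^ℕ`, the shift `σ` and the CA
`(Tx)_i = x_i + x_{i+1}`, the map `S = σ ∘ T^N` is ergodic for every `N ≥ 1`:
every `S`-invariant (up to null sets) measurable set has measure `0` or `1`. -/
theorem shift_comp_CA_ergodic
    [MeasurableSpace (ZMod 2)] [MeasurableSingletonClass (ZMod 2)]
    (μ : Measure (ℕ → ZMod 2)) [IsProbabilityMeasure μ]
    (hμ : ∀ (s : Finset ℕ) (c : ℕ → ZMod 2),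
      μ {x | ∀ i ∈ s, x i = c i} = ((2 : ENNReal))⁻¹ ^ s.card)
    (T σ : (ℕ → ZMod 2) → (ℕ → ZMod 2))
    (hT : ∀ x i, T x i = x i + x (i + 1))
    (hσ : ∀ x i, σ x i = x (i + 1))
    (N : ℕ) (hN : 1 ≤ N)
    (S : (ℕ → ZMod 2) → (ℕ → ZMod 2)) (hS : S = fun x => σ (T^[N] x)) :
    ∀ A : Set (ℕ → ZMod 2), MeasurableSet A → μ ((S ⁻¹' A) ∆ A) = 0 →
      μ A = 0 ∨ μ A = 1 :=
  ShiftCA.main μ hμ T σ hT hσ N hN S hS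
end

section
/- Let (X,𝒳,μ,Φ) be a ℤ²-measure-preserving system and v = (1,β) a direction. If for all B, C ∈ 𝒳 and some b > 0, lim_{k→∞} (1/#Λ_k^v(b)) ∑_{(m,n)∈Λ_k^v(b)} |μ(Φ^{-(m,n)}B ∩ C) - μ(B)μ(C)| = 0, then the same holds for every b > 0. -/
open Filter MeasureTheory


private lemma step_pos {δ ε x : ℝ} (hδ : 0 < δ) (hδε : δ ≤ ε) :
    ∃ j : ℕ, j ≤ ⌈1/δ⌉₊ ∧ ∃ n : ℤ, |x + (j : ℝ) * δ - (n : ℝ)| ≤ ε := by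
  set c : ℝ := (⌈x⌉ : ℝ) with hc
  have hxc : x ≤ c := Int.le_ceil x
  have hc1 : c ≤ x + 1 := (Int.ceil_lt_add_one x).le
  refine ⟨⌈(c - x)/δ⌉₊, ?_, ⌈x⌉, ?_⟩
  · apply Nat.ceil_le_ceil
    rw [div_le_div_iff_of_pos_right hδ]
    linarith
  · set j := ⌈(c - x)/δ⌉₊ with hj
    have h0 : (c - x)/δ ≤ (j:ℝ) := Nat.le_ceil _
    have h1 : (j:ℝ) < (c - x)/δ + 1 := Nat.ceil_lt_add_one (div_nonneg (by linarith) hδ.le)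
    have h2 : c - x ≤ j * δ := by
      rw [div_le_iff₀ hδ] at h0; linarith
    have h3 : (j : ℝ) * δ < c - x + δ := by
      have hq : ((j:ℝ) - 1) < (c-x)/δ := by linarith
      have := mul_lt_mul_of_pos_right hq hδ
      rw [div_mul_cancel₀ _ hδ.ne'] at this
      linarith
    rw [abs_le]
    constructor <;> [skip; skip] <;> simp only [← hc] <;> nlinarith [hδ.trans_le hδε]

private lemma step_any {δ ε x : ℝ} (hδ : δ ≠ 0) (hδε : |δ| ≤ ε) :
    ∃ j : ℕ, j ≤ ⌈1/|δ|⌉₊ ∧ ∃ n : ℤ, |x + (j : ℝ) * δ - (n : ℝ)| ≤ ε := by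
  rcases hδ.lt_or_gt with hneg | hpos
  · have habs : |δ| = -δ := abs_of_neg hneg
    obtain ⟨j, hj, n, hn⟩ := step_pos (x := -x) (δ := -δ) (ε := ε) (by linarith) (by rw [← habs]; exact hδε)
    refine ⟨j, by rwa [habs], -n, ?_⟩
    have : x + (j:ℝ) * δ - ((-n : ℤ) : ℝ) = -(-x + (j:ℝ) * -δ - (n:ℝ)) := by push_cast; ring
    rw [this, abs_neg]; exact hn
  · have habs : |δ| = δ := abs_of_pos hpos
    obtain ⟨j, hj, n, hn⟩ := step_pos (ε := ε) hpos (by rw [← habs]; exact hδε)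
    exact ⟨j, by rwa [habs], n, hn⟩

private lemma key_arith (β : ℝ) {ε : ℝ} (hε : 0 < ε) :
    ∃ M : ℕ, ∀ m : ℤ, ∃ p : ℕ, p ≤ M ∧ ∃ n : ℤ, |β * ((m : ℝ) + (p : ℝ)) - (n : ℝ)| ≤ ε := by
  obtain ⟨N, hN⟩ := exists_nat_gt (1/ε)
  have hN0 : 0 < N := by
    have h1 : (0:ℝ) < 1/ε := by positivity
    exact_mod_cast h1.trans hN
  obtain ⟨q, p, hp0, hpN, hdio⟩ := Real.exists_int_int_abs_mul_sub_le β hN0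
  set δ : ℝ := (p:ℝ) * β - (q:ℝ) with hδdef
  have hδε : |δ| ≤ ε := by
    refine hdio.trans ?_
    rw [div_le_iff₀ (by positivity)]
    have hNe : 1 < ε * N := by
      rw [div_lt_iff₀ hε] at hN; linarith
    nlinarith [hε]
  by_cases hδ0 : δ = 0
  · -- rational case : β * p = q exactly
    have hβp : (p:ℝ) * β = (q:ℝ) := by
      have := hδ0; rw [hδdef] at this; linarith [sub_eq_zero.mp this]
    refine ⟨p.toNat, fun m => ?_⟩
    set r : ℤ := (-m) % p with hr
    have hr0 : 0 ≤ r := Int.emod_nonneg _ hp0.ne'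
    have hrp : r < p := Int.emod_lt_of_pos _ hp0
    have hdvd : p ∣ m + r := ⟨-((-m)/p), by rw [hr, Int.emod_def]; ring⟩
    obtain ⟨t, ht⟩ := hdvd
    refine ⟨r.toNat, ?_, q * t, ?_⟩
    · exact_mod_cast Int.toNat_le_toNat hrp.le
    · have hrcast : ((r.toNat : ℕ) : ℝ) = (r : ℝ) := by
        exact_mod_cast congrArg (Int.cast : ℤ → ℝ) (Int.toNat_of_nonneg hr0)
      have hcast : (m : ℝ) + (r : ℝ) = (p : ℝ) * (t : ℝ) := by exact_mod_cast congrArg (Int.cast : ℤ → ℝ) ht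
      have : β * ((m:ℝ) + (r.toNat : ℝ)) - ((q * t : ℤ) : ℝ) = 0 := by
        rw [hrcast]
        push_cast
        rw [hcast]
        linear_combination (t:ℝ) * hβp
      rw [this]; simpa using hε.le
  · refine ⟨⌈1/|δ|⌉₊ * p.toNat, fun m => ?_⟩
    obtain ⟨j, hj, n₀, hn₀⟩ := step_any hδ0 hδε (x := β * m)
    refine ⟨j * p.toNat, Nat.mul_le_mul_right _ hj, n₀ + j * q, ?_⟩
    have hpt : ((p.toNat : ℕ) : ℝ) = (p : ℝ) := by
      exact_mod_cast congrArg (Int.cast : ℤ → ℝ) (Int.toNat_of_nonneg hp0.le)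
    have : β * ((m:ℝ) + ((j * p.toNat : ℕ) : ℝ)) - ((n₀ + j * q : ℤ) : ℝ)
        = β * (m:ℝ) + (j:ℝ) * δ - (n₀:ℝ) := by
      push_cast
      rw [hpt, hδdef]
      ring
    rw [this]; exact hn₀


private lemma card_upper {β : ℝ} {Λ : ℝ → ℕ → Finset (ℤ × ℤ)}
    (hΛ : ∀ (b : ℝ) (k : ℕ) (p : ℤ × ℤ), p ∈ Λ b k ↔
      0 ≤ p.1 ∧ p.1 ≤ (k : ℤ) - 1 ∧
        β * (p.1 : ℝ) - b / 2 ≤ (p.2 : ℝ) ∧ (p.2 : ℝ) ≤ β * (p.1 : ℝ) + b / 2)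
    {b : ℝ} (hb : 0 ≤ b) (k : ℕ) :
    ((Λ b k).card : ℝ) ≤ (k : ℝ) * (b + 1) := by
  have hcard : (Λ b k).card ≤ (k * (⌊b⌋ + 1).toNat) := by
    have := Finset.card_le_card_of_injOn
      (f := fun p : ℤ × ℤ => (p.1, p.2 - ⌈β * (p.1 : ℝ) - b / 2⌉))
      (s := Λ b k) (t := Finset.Ico (0:ℤ) (k:ℤ) ×ˢ Finset.Icc (0:ℤ) ⌊b⌋) ?_ ?_
    · refine this.trans ?_
      rw [Finset.card_product, Int.card_Ico, Int.card_Icc]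
      simp
    · intro p hp
      obtain ⟨h1, h2, h3, h4⟩ := (hΛ b k p).mp hp
      simp only [Finset.mem_coe, Finset.mem_product, Finset.mem_Ico, Finset.mem_Icc]
      refine ⟨⟨h1, by omega⟩, ?_, ?_⟩
      · have : ⌈β * (p.1 : ℝ) - b / 2⌉ ≤ p.2 := Int.ceil_le.mpr h3
        omega
      · have h5 : (p.2 : ℝ) - ⌈β * (p.1 : ℝ) - b / 2⌉ ≤ b := by
          have := Int.le_ceil (β * (p.1 : ℝ) - b / 2)
          linarith
        have : ((p.2 - ⌈β * (p.1 : ℝ) - b / 2⌉ : ℤ) : ℝ) ≤ b := by push_cast; linarith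
        exact Int.le_floor.mpr this
    · intro p hp q hq hpq
      simp only [Prod.mk.injEq] at hpq
      obtain ⟨e1, e2⟩ := hpq
      have : p.2 = q.2 := by rw [e1] at e2; omega
      exact Prod.ext e1 this
  have h2 : ((⌊b⌋ + 1).toNat : ℝ) ≤ b + 1 := by
    have hfl : (0:ℤ) ≤ ⌊b⌋ := Int.floor_nonneg.mpr hb
    have ht : ((⌊b⌋ + 1).toNat : ℤ) = ⌊b⌋ + 1 := Int.toNat_of_nonneg (by omega)
    have h3 : ((⌊b⌋ + 1).toNat : ℝ) = ((⌊b⌋ : ℝ) + 1) := by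
      exact_mod_cast congrArg (Int.cast : ℤ → ℝ) ht
    rw [h3]
    have := Int.floor_le b
    linarith
  calc ((Λ b k).card : ℝ) ≤ ((k * (⌊b⌋ + 1).toNat : ℕ) : ℝ) := by exact_mod_cast hcard
    _ = (k : ℝ) * ((⌊b⌋ + 1).toNat : ℝ) := by push_cast; ring
    _ ≤ (k : ℝ) * (b + 1) := by
        apply mul_le_mul_of_nonneg_left h2 (by positivity)

private lemma card_lower {β : ℝ} {Λ : ℝ → ℕ → Finset (ℤ × ℤ)}
    (hΛ : ∀ (b : ℝ) (k : ℕ) (p : ℤ × ℤ), p ∈ Λ b k ↔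
      0 ≤ p.1 ∧ p.1 ≤ (k : ℤ) - 1 ∧
        β * (p.1 : ℝ) - b / 2 ≤ (p.2 : ℝ) ∧ (p.2 : ℝ) ≤ β * (p.1 : ℝ) + b / 2)
    {b : ℝ} {M : ℕ}
    (hM : ∀ m : ℤ, ∃ p : ℕ, p ≤ M ∧ ∃ n : ℤ, |β * ((m : ℝ) + (p : ℝ)) - (n : ℝ)| ≤ b / 2)
    (k : ℕ) : (k / (M + 1) : ℕ) ≤ (Λ b k).card := by
  choose P hP Nf hNf using hM
  have := Finset.card_le_card_of_injOn
    (f := fun j : ℕ => ((((M+1) * j : ℕ) : ℤ) + (P ((M+1) * j : ℕ) : ℤ), Nf ((M+1) * j : ℕ)))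
    (s := Finset.range (k / (M + 1))) (t := Λ b k) ?_ ?_
  · simpa using this
  · intro j hj
    rw [Finset.mem_coe, Finset.mem_range] at hj
    rw [Finset.mem_coe, hΛ]
    dsimp only
    set m : ℤ := (((M+1) * j : ℕ) : ℤ) with hm
    have habs := abs_le.mp (hNf m)
    have hPle : P m ≤ M := hP m
    have hj1 : (j + 1) * (M+1) ≤ k := (Nat.le_div_iff_mul_le (Nat.succ_pos M)).mp (Nat.succ_le_of_lt hj)
    have hmn : m = ((M:ℤ)+1) * (j:ℤ) := by rw [hm]; push_cast; ring
    have hjk : ((j:ℤ) + 1) * ((M:ℤ)+1) ≤ (k:ℤ) := by exact_mod_cast hj1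
    have hple' : ((P m : ℕ) : ℤ) ≤ (M:ℤ) := by exact_mod_cast hPle
    have hm0 : (0:ℤ) ≤ m := by rw [hm]; positivity
    refine ⟨add_nonneg hm0 (by positivity), ?_, ?_, ?_⟩
    · nlinarith [hjk, hple', hmn]
    · have := habs.1
      push_cast
      linarith
    · have := habs.2
      push_cast
      linarith
  · intro j hj j' hj' he
    simp only [Prod.mk.injEq] at he
    have e1 : ((((M+1) * j : ℕ) : ℤ) + (P ((M+1) * j : ℕ) : ℤ))
        = ((((M+1) * j' : ℕ) : ℤ) + (P ((M+1) * j' : ℕ) : ℤ)) := he.1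
    have e2 : (M+1) * j + P ((M+1) * j : ℕ) = (M+1) * j' + P ((M+1) * j' : ℕ) := by
      exact_mod_cast e1
    have d1 : ((M+1) * j + P ((M+1) * j : ℕ)) / (M+1) = j := by
      rw [Nat.mul_add_div (Nat.succ_pos M)]
      simp [Nat.div_eq_of_lt (Nat.lt_succ_of_le (hP _))]
    have d2 : ((M+1) * j' + P ((M+1) * j' : ℕ)) / (M+1) = j' := by
      rw [Nat.mul_add_div (Nat.succ_pos M)]
      simp [Nat.div_eq_of_lt (Nat.lt_succ_of_le (hP _))]
    rw [← d1, ← d2, e2]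

set_option maxHeartbeats 1000000 in
/-- If the directional weak mixing averages along the band `Λ^v(b)` (direction
`v = (1,β)`, width `b`) converge to `0` for some `b > 0`, then they converge to `0`
for every `b > 0`. -/
theorem directional_wm_independent_of_band {X : Type} [MeasurableSpace X]
    (μ : Measure X) [IsProbabilityMeasure μ]
    (Φ : ℤ × ℤ → X → X)
    (hmp : ∀ v, MeasurePreserving (Φ v) μ μ)
    (hact : ∀ v w, Φ (v + w) = Φ v ∘ Φ w)
    (β : ℝ)
    (Λ : ℝ → ℕ → Finset (ℤ × ℤ))
    (hΛ : ∀ (b : ℝ) (k : ℕ) (p : ℤ × ℤ), p ∈ Λ b k ↔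
      0 ≤ p.1 ∧ p.1 ≤ (k : ℤ) - 1 ∧
        β * (p.1 : ℝ) - b / 2 ≤ (p.2 : ℝ) ∧ (p.2 : ℝ) ≤ β * (p.1 : ℝ) + b / 2)
    (h : ∃ b > (0 : ℝ), ∀ B C : Set X, MeasurableSet B → MeasurableSet C →
      Tendsto (fun k : ℕ => (1 / ((Λ b k).card : ℝ)) *
          ∑ p ∈ Λ b k, |(μ (Φ p ⁻¹' B ∩ C)).toReal - (μ B).toReal * (μ C).toReal|)
        atTop (nhds 0)) :
    ∀ b > (0 : ℝ), ∀ B C : Set X, MeasurableSet B → MeasurableSet C →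
      Tendsto (fun k : ℕ => (1 / ((Λ b k).card : ℝ)) *
          ∑ p ∈ Λ b k, |(μ (Φ p ⁻¹' B ∩ C)).toReal - (μ B).toReal * (μ C).toReal|)
        atTop (nhds 0) := by
  obtain ⟨b₀, hb₀, h₀⟩ := h
  intro b hb B C hB hC
  set f : ℤ × ℤ → ℝ :=
    fun x => |(μ (Φ x ⁻¹' B ∩ C)).toReal - (μ B).toReal * (μ C).toReal| with hf
  have hf0 : ∀ x, 0 ≤ f x := fun x => abs_nonneg _
  obtain ⟨M₀, hM₀⟩ := key_arith β (half_pos hb₀)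
  obtain ⟨Mb, hMb⟩ := key_arith β (half_pos hb)
  have hup : ∀ k : ℕ, ((Λ b₀ k).card : ℝ) ≤ (k : ℝ) * (b₀ + 1) := card_upper hΛ hb₀.le
  have hlow : ∀ k : ℕ, (k / (Mb + 1) : ℕ) ≤ (Λ b k).card := card_lower hΛ hMb
  set R : ℤ := ⌈b₀/2 + |β| * (M₀ : ℝ) + b/2⌉ with hR
  set F : Finset (ℤ × ℤ) := Finset.Icc (0:ℤ) (M₀:ℤ) ×ˢ Finset.Icc (-R) R with hF
  -- covering claim
  have cover : ∀ k : ℕ, ∀ x ∈ Λ b k, ∃ s ∈ F, x + s ∈ Λ b₀ (k + M₀) := by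
    intro k x hx
    obtain ⟨h1, h2, h3, h4⟩ := (hΛ b k x).mp hx
    obtain ⟨p, hpM, n', hn'⟩ := hM₀ x.1
    refine ⟨((p:ℤ), n' - x.2), ?_, ?_⟩
    · have hbb : |(x.2:ℝ) - β * (x.1:ℝ)| ≤ b/2 := abs_le.mpr ⟨by linarith, by linarith⟩
      have h6 : |((n':ℝ) - (x.2:ℝ))| ≤ b₀/2 + |β| * (M₀ : ℝ) + b/2 := by
        have he : (n':ℝ) - (x.2:ℝ)
            = -(β * ((x.1:ℝ) + (p:ℝ)) - (n':ℝ)) + β * (p:ℝ) + -((x.2:ℝ) - β * (x.1:ℝ)) := by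
          ring
        rw [he]
        refine (abs_add_three _ _ _).trans ?_
        rw [abs_neg, abs_neg, abs_mul]
        have hpc : ((p:ℕ) : ℝ) ≤ (M₀ : ℝ) := by exact_mod_cast hpM
        have habsp : |(p:ℝ)| = (p:ℝ) := abs_of_nonneg (by positivity)
        rw [habsp]
        have := abs_nonneg β
        nlinarith [hn', hbb]
      have h7 : |((n' - x.2 : ℤ) : ℝ)| ≤ (R : ℝ) := by
        push_cast
        exact h6.trans (Int.le_ceil _)
      have h8 : |n' - x.2| ≤ R := by exact_mod_cast h7
      rw [hF]
      simp only [Finset.mem_product, Finset.mem_Icc]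
      refine ⟨⟨by positivity, by exact_mod_cast hpM⟩, ?_, ?_⟩
      · linarith [(abs_le.mp h8).1]
      · linarith [(abs_le.mp h8).2]
    · rw [hΛ]
      have habs := abs_le.mp hn'
      have hx2 : (x + ((p:ℤ), n' - x.2)).2 = n' := by simp
      have hx1 : (x + ((p:ℤ), n' - x.2)).1 = x.1 + (p:ℤ) := by simp
      rw [hx1, hx2]
      refine ⟨by positivity, ?_, ?_, ?_⟩
      · push_cast
        have hpc : (p : ℤ) ≤ (M₀ : ℤ) := by exact_mod_cast hpM
        omega
      · push_cast
        linarith [habs.1]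
      · push_cast
        linarith [habs.2]
  -- sum covering bound
  have sum_bound : ∀ k : ℕ,
      (∑ x ∈ Λ b k, f x) ≤ ∑ s ∈ F, ∑ y ∈ Λ b₀ (k + M₀), f (y - s) := by
    intro k
    have step1 : ∀ x ∈ Λ b k,
        f x ≤ ∑ s ∈ F, if x + s ∈ Λ b₀ (k + M₀) then f x else 0 := by
      intro x hx
      obtain ⟨s₀, hs₀F, hs₀⟩ := cover k x hx
      have := Finset.single_le_sum
        (f := fun s => if x + s ∈ Λ b₀ (k + M₀) then f x else 0)
        (fun s _ => by by_cases hc : x + s ∈ Λ b₀ (k + M₀) <;> simp [hc, hf0 x]) hs₀F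
      simpa [hs₀] using this
    calc (∑ x ∈ Λ b k, f x)
        ≤ ∑ x ∈ Λ b k, ∑ s ∈ F, (if x + s ∈ Λ b₀ (k + M₀) then f x else 0) :=
          Finset.sum_le_sum step1
      _ = ∑ s ∈ F, ∑ x ∈ Λ b k, (if x + s ∈ Λ b₀ (k + M₀) then f x else 0) :=
          Finset.sum_comm
      _ ≤ ∑ s ∈ F, ∑ y ∈ Λ b₀ (k + M₀), f (y - s) := by
          refine Finset.sum_le_sum (fun s _ => ?_)
          rw [← Finset.sum_filter]
          have hinj : Set.InjOn (· + s) ((Λ b k).filter (fun x => x + s ∈ Λ b₀ (k + M₀))) :=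
            fun a _ a' _ hee => by exact add_right_cancel hee
          calc (∑ x ∈ (Λ b k).filter (fun x => x + s ∈ Λ b₀ (k + M₀)), f x)
              = ∑ x ∈ (Λ b k).filter (fun x => x + s ∈ Λ b₀ (k + M₀)), f ((x + s) - s) := by
                apply Finset.sum_congr rfl
                intro x _
                rw [add_sub_cancel_right]
            _ = ∑ y ∈ ((Λ b k).filter (fun x => x + s ∈ Λ b₀ (k + M₀))).image (· + s),
                  f (y - s) := by
                rw [Finset.sum_image (fun a ha a' ha' hee => hinj ha ha' hee)]
            _ ≤ ∑ y ∈ Λ b₀ (k + M₀), f (y - s) := by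
                apply Finset.sum_le_sum_of_subset_of_nonneg
                · intro y hy
                  simp only [Finset.mem_image, Finset.mem_filter] at hy
                  obtain ⟨x, ⟨_, hx2⟩, rfl⟩ := hy
                  exact hx2
                · intro y _ _
                  exact hf0 _
  -- per-shift limits
  have hg : ∀ s : ℤ × ℤ, Tendsto
      (fun k : ℕ => (1 / ((Λ b₀ k).card : ℝ)) * ∑ y ∈ Λ b₀ k, f (y - s))
      atTop (nhds 0) := by
    intro s
    have hmeas : MeasurableSet (Φ (-s) ⁻¹' B) := (hmp (-s)).measurable hB
    have hμs : μ (Φ (-s) ⁻¹' B) = μ B := (hmp (-s)).measure_preimage hB.nullMeasurableSet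
    have hkey : ∀ y : ℤ × ℤ, Φ (y - s) ⁻¹' B = Φ y ⁻¹' (Φ (-s) ⁻¹' B) := by
      intro y
      rw [sub_eq_neg_add, hact, Set.preimage_comp]
    have := h₀ (Φ (-s) ⁻¹' B) C hmeas hC
    refine this.congr (fun k => ?_)
    congr 1
    refine Finset.sum_congr rfl (fun y _ => ?_)
    simp only [hf, hkey, hμs]
  set G : ℕ → ℝ := fun k =>
    ∑ s ∈ F, (1 / ((Λ b₀ (k + M₀)).card : ℝ)) * ∑ y ∈ Λ b₀ (k + M₀), f (y - s) with hG
  have hGnn : ∀ k, 0 ≤ G k := by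
    intro k
    refine Finset.sum_nonneg (fun s _ => ?_)
    exact mul_nonneg (one_div_nonneg.mpr (by positivity)) (Finset.sum_nonneg (fun y _ => hf0 _))
  have hGlim : Tendsto G atTop (nhds 0) := by
    have := tendsto_finset_sum F
      (fun s _ => (tendsto_add_atTop_iff_nat M₀).mpr (hg s))
    simpa [hG] using this
  set C₀ : ℝ := (b₀ + 1) * (Mb + 1) * 2 with hC₀
  have hC₀pos : 0 < C₀ := by positivity
  have hbound : ∀ᶠ k in atTop,
      (1 / ((Λ b k).card : ℝ)) * ∑ x ∈ Λ b k, f x ≤ C₀ * G k := by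
    filter_upwards [eventually_ge_atTop (2 * Mb + M₀ + Mb + 1)] with k hk
    have hdiv := Nat.div_add_mod k (Mb + 1)
    have hmod : k % (Mb + 1) ≤ Mb := Nat.le_of_lt_succ (Nat.mod_lt _ (Nat.succ_pos _))
    set d : ℕ := k / (Mb + 1) with hd
    have hcb : ((d : ℕ) : ℝ) ≤ ((Λ b k).card : ℝ) := by exact_mod_cast hlow k
    have hdlow : ((Mb : ℝ) + 1) * (d : ℝ) ≥ (k : ℝ) - Mb := by
      have : (Mb + 1) * d + k % (Mb + 1) = k := hdiv
      have hc : ((Mb + 1) * d + k % (Mb + 1) : ℕ) = (k : ℕ) := this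
      have : ((Mb:ℝ) + 1) * d + (k % (Mb + 1) : ℕ) = (k : ℝ) := by exact_mod_cast hc
      have hmr : ((k % (Mb + 1) : ℕ) : ℝ) ≤ (Mb : ℝ) := by exact_mod_cast hmod
      linarith
    have hd1 : 1 ≤ d := by
      rw [hd, Nat.one_le_div_iff (Nat.succ_pos _)]
      omega
    have hcbpos : (0:ℝ) < ((Λ b k).card : ℝ) := by
      have : (1:ℝ) ≤ (d:ℝ) := by exact_mod_cast hd1
      linarith
    have hc'pos : (0:ℝ) < ((Λ b₀ (k + M₀)).card : ℝ) := by
      have hl := card_lower hΛ hM₀ (k + M₀)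
      have : 1 ≤ (k + M₀) / (M₀ + 1) := by
        rw [Nat.one_le_div_iff (Nat.succ_pos _)]
        omega
      have : (1:ℕ) ≤ (Λ b₀ (k + M₀)).card := le_trans this hl
      exact_mod_cast Nat.lt_of_lt_of_le Nat.zero_lt_one this
    set cb : ℝ := ((Λ b k).card : ℝ) with hcb'
    set c' : ℝ := ((Λ b₀ (k + M₀)).card : ℝ) with hc''
    have hratio : c' ≤ C₀ * cb := by
      have hup' : c' ≤ ((k:ℝ) + M₀) * (b₀ + 1) := by
        have := hup (k + M₀)
        push_cast at this ⊢
        linarith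
      have hkM : 2 * ((k:ℝ) - Mb) ≥ (k:ℝ) + M₀ := by
        have : (2 * Mb + M₀ + Mb + 1 : ℕ) ≤ k := hk
        have : ((2 * Mb + M₀ + Mb + 1 : ℕ) : ℝ) ≤ (k : ℝ) := by exact_mod_cast this
        push_cast at this
        linarith
      have hb₀1 : (0:ℝ) < b₀ + 1 := by linarith
      calc c' ≤ ((k:ℝ) + M₀) * (b₀ + 1) := hup'
        _ ≤ 2 * ((k:ℝ) - Mb) * (b₀ + 1) := by nlinarith
        _ ≤ 2 * (((Mb : ℝ) + 1) * (d : ℝ)) * (b₀ + 1) := by nlinarith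
        _ ≤ C₀ * cb := by
            rw [hC₀]
            nlinarith [hcb, hb₀1]
    calc (1 / cb) * ∑ x ∈ Λ b k, f x
        ≤ (1 / cb) * ∑ s ∈ F, ∑ y ∈ Λ b₀ (k + M₀), f (y - s) := by
          apply mul_le_mul_of_nonneg_left (sum_bound k) (one_div_nonneg.mpr hcbpos.le)
      _ = ∑ s ∈ F, (1 / cb) * (c' * ((1 / c') * ∑ y ∈ Λ b₀ (k + M₀), f (y - s))) := by
          rw [Finset.mul_sum]
          refine Finset.sum_congr rfl (fun s _ => ?_)
          rw [← mul_assoc (c') _, mul_one_div, div_self hc'pos.ne', one_mul]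
      _ ≤ ∑ s ∈ F, C₀ * ((1 / c') * ∑ y ∈ Λ b₀ (k + M₀), f (y - s)) := by
          refine Finset.sum_le_sum (fun s _ => ?_)
          have hgnn : 0 ≤ (1 / c') * ∑ y ∈ Λ b₀ (k + M₀), f (y - s) :=
            mul_nonneg (one_div_nonneg.mpr hc'pos.le) (Finset.sum_nonneg (fun y _ => hf0 _))
          have hcc : (1 / cb) * c' ≤ C₀ := by
            rw [one_div, inv_mul_le_iff₀ hcbpos]
            calc c' ≤ C₀ * cb := hratio
              _ = cb * C₀ := mul_comm _ _
          calc (1 / cb) * (c' * ((1 / c') * ∑ y ∈ Λ b₀ (k + M₀), f (y - s)))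
              = ((1 / cb) * c') * ((1 / c') * ∑ y ∈ Λ b₀ (k + M₀), f (y - s)) := by ring
            _ ≤ C₀ * ((1 / c') * ∑ y ∈ Λ b₀ (k + M₀), f (y - s)) :=
                mul_le_mul_of_nonneg_right hcc hgnn
      _ = C₀ * G k := by rw [hG, Finset.mul_sum]
  have hCG : Tendsto (fun k => C₀ * G k) atTop (nhds 0) := by
    have := hGlim.const_mul C₀
    rwa [mul_zero] at this
  refine tendsto_of_tendsto_of_tendsto_of_le_of_le' tendsto_const_nhds hCG ?_ hbound
  exact Eventually.of_forall (fun k =>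
    mul_nonneg (one_div_nonneg.mpr (by positivity)) (Finset.sum_nonneg (fun x _ => hf0 _)))
end
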